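/- arXiv:1505.03820 — 4 statements merged into one kernel-verified Lean document; each statement's English description precedes it below -/
import Mathlib

section
/- Suppose d_1 = d_2 = d > 0 with a_1 > d and a_2 > d, 0 < μ_i < K_i for both i = 1, 2 (where μ_i = d/(a_i − d)), and μ_1(K_1a_1 − a_1 − K_1d − d)/(a_1K_1) + r·μ_2(K_2a_2 − a_2 − K_2d − d)/(a_2K_2) > 0. Then the characteristic polynomial of the Jacobian matrix of the right-hand side of Model (1) evaluated at the interior equilibrium E^i = (μ_1, ν_1, μ_2, ν_2) has a complex root with strictly positive real part (so E^i is unstable). -/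
open Polynomial

/-- The right-hand side of Model (1), as a vector field on `ℝ⁴`,
with coordinates `p = (x₁, y₁, x₂, y₂)`. -/
noncomputable def model1RHS (r a1 a2 K1 K2 d1 d2 ρ1 ρ2 : ℝ)
    (p : Fin 4 → ℝ) : Fin 4 → ℝ :=
  ![p 0 * (1 - p 0 / K1) - a1 * p 0 * p 1 / (1 + p 0),
    a1 * p 0 * p 1 / (1 + p 0) - d1 * p 1 +
      ρ1 * (a1 * p 0 * p 1 * p 3 / (1 + p 0) - a2 * p 2 * p 1 * p 3 / (1 + p 2)),
    r * p 2 * (1 - p 2 / K2) - a2 * p 2 * p 3 / (1 + p 2),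
    a2 * p 2 * p 3 / (1 + p 2) - d2 * p 3 +
      ρ2 * (a2 * p 2 * p 1 * p 3 / (1 + p 2) - a1 * p 0 * p 1 * p 3 / (1 + p 0))]

/-- The Jacobian matrix of the right-hand side of Model (1): the `4 × 4`
matrix of partial derivatives with respect to `(x₁, y₁, x₂, y₂)`. -/
noncomputable def model1Jacobian (r a1 a2 K1 K2 d1 d2 ρ1 ρ2 : ℝ)
    (p : Fin 4 → ℝ) : Matrix (Fin 4) (Fin 4) ℝ :=
  Matrix.of fun i j =>
    fderiv ℝ (fun q : Fin 4 → ℝ => model1RHS r a1 a2 K1 K2 d1 d2 ρ1 ρ2 q i) p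
      (Pi.single j 1)



section Aux

private lemma projHasFDerivAt (i : Fin 4) (p : Fin 4 → ℝ) :
    HasFDerivAt (fun q : Fin 4 → ℝ => q i)
      (ContinuousLinearMap.proj (R := ℝ) (φ := fun _ : Fin 4 => ℝ) i) p :=
  hasFDerivAt_apply i p

private lemma invCompHasFDerivAt (p : Fin 4 → ℝ) (i : Fin 4) (h : 1 + p i ≠ 0) :
    HasFDerivAt (fun q : Fin 4 → ℝ => (1 + q i)⁻¹)
      (-(((1 + p i) ^ 2)⁻¹ •
        (ContinuousLinearMap.proj (R := ℝ) (φ := fun _ : Fin 4 => ℝ) i))) p := by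
  have hg : HasFDerivAt (fun q : Fin 4 → ℝ => 1 + q i)
      ((0 : (Fin 4 → ℝ) →L[ℝ] ℝ) + ContinuousLinearMap.proj i) p :=
    (hasFDerivAt_const (1:ℝ) p).add (projHasFDerivAt i p)
  have := (hasDerivAt_inv h).comp_hasFDerivAt p hg
  simp at this
  exact this

private lemma fderiv_diag0 (a1 K1 : ℝ) (p : Fin 4 → ℝ) (h : 1 + p 0 ≠ 0) (hK : K1 ≠ 0) :
    fderiv ℝ (fun q : Fin 4 → ℝ => q 0 * (1 - q 0 / K1) - a1 * q 0 * q 1 / (1 + q 0)) p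
      (Pi.single 0 1)
    = 1 - 2 * p 0 / K1 - a1 * p 1 / (1 + p 0) ^ 2 := by
  have h0 := projHasFDerivAt 0 p
  have h1 := projHasFDerivAt 1 p
  have hinv := invCompHasFDerivAt p 0 h
  have hA : HasFDerivAt (fun q : Fin 4 → ℝ => q 0 * (1 - q 0 * K1⁻¹)) _ p :=
    h0.mul ((hasFDerivAt_const (1:ℝ) p).sub (h0.mul_const K1⁻¹))
  have hB : HasFDerivAt (fun q : Fin 4 → ℝ => a1 * q 0 * q 1 * (1 + q 0)⁻¹) _ p :=
    (((hasFDerivAt_const a1 p).mul h0).mul h1).mul hinv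
  have hF := hA.sub hB
  have hfun : (fun q : Fin 4 → ℝ => q 0 * (1 - q 0 / K1) - a1 * q 0 * q 1 / (1 + q 0))
      = (fun q : Fin 4 → ℝ => q 0 * (1 - q 0 * K1⁻¹) - a1 * q 0 * q 1 * (1 + q 0)⁻¹) := by
    funext q; rw [div_eq_mul_inv, div_eq_mul_inv]
  erw [hfun, hF.fderiv]
  simp [Pi.single_apply]
  field_simp
  ring

private lemma fderiv_diag2 (r a2 K2 : ℝ) (p : Fin 4 → ℝ) (h : 1 + p 2 ≠ 0) (hK : K2 ≠ 0) :
    fderiv ℝ (fun q : Fin 4 → ℝ => r * q 2 * (1 - q 2 / K2) - a2 * q 2 * q 3 / (1 + q 2)) p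
      (Pi.single 2 1)
    = r - 2 * r * p 2 / K2 - a2 * p 3 / (1 + p 2) ^ 2 := by
  have h2 := projHasFDerivAt 2 p
  have h3 := projHasFDerivAt 3 p
  have hinv := invCompHasFDerivAt p 2 h
  have hA : HasFDerivAt (fun q : Fin 4 → ℝ => r * q 2 * (1 - q 2 * K2⁻¹)) _ p :=
    ((hasFDerivAt_const r p).mul h2).mul ((hasFDerivAt_const (1:ℝ) p).sub (h2.mul_const K2⁻¹))
  have hB : HasFDerivAt (fun q : Fin 4 → ℝ => a2 * q 2 * q 3 * (1 + q 2)⁻¹) _ p :=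
    (((hasFDerivAt_const a2 p).mul h2).mul h3).mul hinv
  have hF := hA.sub hB
  have hfun : (fun q : Fin 4 → ℝ => r * q 2 * (1 - q 2 / K2) - a2 * q 2 * q 3 / (1 + q 2))
      = (fun q : Fin 4 → ℝ => r * q 2 * (1 - q 2 * K2⁻¹) - a2 * q 2 * q 3 * (1 + q 2)⁻¹) := by
    funext q; rw [div_eq_mul_inv, div_eq_mul_inv]
  erw [hfun, hF.fderiv]
  simp [Pi.single_apply]
  field_simp
  ring

private lemma fderiv_diag1 (a1 a2 d1 ρ1 : ℝ) (p : Fin 4 → ℝ)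
    (h : 1 + p 0 ≠ 0) (h' : 1 + p 2 ≠ 0) :
    fderiv ℝ (fun q : Fin 4 → ℝ => a1 * q 0 * q 1 / (1 + q 0) - d1 * q 1 +
      ρ1 * (a1 * q 0 * q 1 * q 3 / (1 + q 0) - a2 * q 2 * q 1 * q 3 / (1 + q 2))) p
      (Pi.single 1 1)
    = a1 * p 0 / (1 + p 0) - d1 +
      ρ1 * (a1 * p 0 * p 3 / (1 + p 0) - a2 * p 2 * p 3 / (1 + p 2)) := by
  have h0 := projHasFDerivAt 0 p
  have h1 := projHasFDerivAt 1 p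
  have h2 := projHasFDerivAt 2 p
  have h3 := projHasFDerivAt 3 p
  have hinv0 := invCompHasFDerivAt p 0 h
  have hinv2 := invCompHasFDerivAt p 2 h'
  have hA : HasFDerivAt (fun q : Fin 4 → ℝ => a1 * q 0 * q 1 * (1 + q 0)⁻¹) _ p :=
    (((hasFDerivAt_const a1 p).mul h0).mul h1).mul hinv0
  have hB : HasFDerivAt (fun q : Fin 4 → ℝ => d1 * q 1) _ p :=
    (hasFDerivAt_const d1 p).mul h1
  have hC : HasFDerivAt (fun q : Fin 4 → ℝ => a1 * q 0 * q 1 * q 3 * (1 + q 0)⁻¹) _ p :=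
    ((((hasFDerivAt_const a1 p).mul h0).mul h1).mul h3).mul hinv0
  have hD : HasFDerivAt (fun q : Fin 4 → ℝ => a2 * q 2 * q 1 * q 3 * (1 + q 2)⁻¹) _ p :=
    ((((hasFDerivAt_const a2 p).mul h2).mul h1).mul h3).mul hinv2
  have hF := (hA.sub hB).add ((hasFDerivAt_const ρ1 p).mul (hC.sub hD))
  have hfun : (fun q : Fin 4 → ℝ => a1 * q 0 * q 1 / (1 + q 0) - d1 * q 1 +
        ρ1 * (a1 * q 0 * q 1 * q 3 / (1 + q 0) - a2 * q 2 * q 1 * q 3 / (1 + q 2)))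
      = (fun q : Fin 4 → ℝ => a1 * q 0 * q 1 * (1 + q 0)⁻¹ - d1 * q 1 +
        ρ1 * (a1 * q 0 * q 1 * q 3 * (1 + q 0)⁻¹ - a2 * q 2 * q 1 * q 3 * (1 + q 2)⁻¹)) := by
    funext q; rw [div_eq_mul_inv, div_eq_mul_inv, div_eq_mul_inv]
  erw [hfun, hF.fderiv]
  simp [Pi.single_apply]
  field_simp
  try ring
  try tauto

private lemma fderiv_diag3 (a1 a2 d2 ρ2 : ℝ) (p : Fin 4 → ℝ)
    (h : 1 + p 0 ≠ 0) (h' : 1 + p 2 ≠ 0) :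
    fderiv ℝ (fun q : Fin 4 → ℝ => a2 * q 2 * q 3 / (1 + q 2) - d2 * q 3 +
      ρ2 * (a2 * q 2 * q 1 * q 3 / (1 + q 2) - a1 * q 0 * q 1 * q 3 / (1 + q 0))) p
      (Pi.single 3 1)
    = a2 * p 2 / (1 + p 2) - d2 +
      ρ2 * (a2 * p 2 * p 1 / (1 + p 2) - a1 * p 0 * p 1 / (1 + p 0)) := by
  have h0 := projHasFDerivAt 0 p
  have h1 := projHasFDerivAt 1 p
  have h2 := projHasFDerivAt 2 p
  have h3 := projHasFDerivAt 3 p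
  have hinv0 := invCompHasFDerivAt p 0 h
  have hinv2 := invCompHasFDerivAt p 2 h'
  have hA : HasFDerivAt (fun q : Fin 4 → ℝ => a2 * q 2 * q 3 * (1 + q 2)⁻¹) _ p :=
    (((hasFDerivAt_const a2 p).mul h2).mul h3).mul hinv2
  have hB : HasFDerivAt (fun q : Fin 4 → ℝ => d2 * q 3) _ p :=
    (hasFDerivAt_const d2 p).mul h3
  have hC : HasFDerivAt (fun q : Fin 4 → ℝ => a2 * q 2 * q 1 * q 3 * (1 + q 2)⁻¹) _ p :=
    ((((hasFDerivAt_const a2 p).mul h2).mul h1).mul h3).mul hinv2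
  have hD : HasFDerivAt (fun q : Fin 4 → ℝ => a1 * q 0 * q 1 * q 3 * (1 + q 0)⁻¹) _ p :=
    ((((hasFDerivAt_const a1 p).mul h0).mul h1).mul h3).mul hinv0
  have hF := (hA.sub hB).add ((hasFDerivAt_const ρ2 p).mul (hC.sub hD))
  have hfun : (fun q : Fin 4 → ℝ => a2 * q 2 * q 3 / (1 + q 2) - d2 * q 3 +
        ρ2 * (a2 * q 2 * q 1 * q 3 / (1 + q 2) - a1 * q 0 * q 1 * q 3 / (1 + q 0)))
      = (fun q : Fin 4 → ℝ => a2 * q 2 * q 3 * (1 + q 2)⁻¹ - d2 * q 3 +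
        ρ2 * (a2 * q 2 * q 1 * q 3 * (1 + q 2)⁻¹ - a1 * q 0 * q 1 * q 3 * (1 + q 0)⁻¹)) := by
    funext q; rw [div_eq_mul_inv, div_eq_mul_inv, div_eq_mul_inv]
  erw [hfun, hF.fderiv]
  simp [Pi.single_apply]
  field_simp
  try ring
  try tauto

end Aux

set_option maxHeartbeats 2000000 in
/-- **Instability of the interior equilibrium `Eⁱ = (μ₁, ν₁, μ₂, ν₂)`
when `d₁ = d₂ = d`.**  If `0 < μᵢ < Kᵢ` for `i = 1, 2` and
`μ₁(K₁a₁ − a₁ − K₁d − d)/(a₁K₁) + r·μ₂(K₂a₂ − a₂ − K₂d − d)/(a₂K₂) > 0`,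
then the characteristic polynomial of the Jacobian of Model (1) at `Eⁱ` has
a complex root with strictly positive real part. -/
theorem model1_interior_equilibrium_unstable
    (r a1 a2 K1 K2 d ρ1 ρ2 : ℝ)
    (hr : 0 < r) (ha1 : 0 < a1) (ha2 : 0 < a2) (hK1 : 0 < K1) (hK2 : 0 < K2)
    (hd : 0 < d) (hρ1 : 0 ≤ ρ1) (hρ2 : 0 ≤ ρ2)
    (ha1d : a1 > d) (ha2d : a2 > d)
    (μ1 μ2 ν1 ν2 : ℝ)
    (hμ1 : μ1 = d / (a1 - d)) (hμ2 : μ2 = d / (a2 - d))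
    (hν1 : ν1 = (K1 - μ1) * (1 + μ1) / (a1 * K1))
    (hν2 : ν2 = r * (K2 - μ2) * (1 + μ2) / (a2 * K2))
    (h1 : 0 < μ1 ∧ μ1 < K1) (h2 : 0 < μ2 ∧ μ2 < K2)
    (hunst : μ1 * (K1 * a1 - a1 - K1 * d - d) / (a1 * K1) +
      r * μ2 * (K2 * a2 - a2 - K2 * d - d) / (a2 * K2) > 0) :
    ∃ z : ℂ,
      ((model1Jacobian r a1 a2 K1 K2 d d ρ1 ρ2 ![μ1, ν1, μ2, ν2]).charpoly.map
        (algebraMap ℝ ℂ)).IsRoot z ∧ 0 < z.re := by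
  obtain ⟨hμ1p, hμ1K⟩ := h1
  obtain ⟨hμ2p, hμ2K⟩ := h2
  set p : Fin 4 → ℝ := ![μ1, ν1, μ2, ν2] with hp
  have hp0 : p 0 = μ1 := rfl
  have hp1 : p 1 = ν1 := rfl
  have hp2 : p 2 = μ2 := rfl
  have hp3 : p 3 = ν2 := rfl
  have h10 : 1 + p 0 ≠ 0 := by rw [hp0]; positivity
  have h12 : 1 + p 2 ≠ 0 := by rw [hp2]; positivity
  set M := model1Jacobian r a1 a2 K1 K2 d d ρ1 ρ2 p with hM
  -- diagonal entries
  have e0 : M 0 0 = 1 - 2 * μ1 / K1 - a1 * ν1 / (1 + μ1) ^ 2 := by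
    have hf : (fun q : Fin 4 → ℝ => model1RHS r a1 a2 K1 K2 d d ρ1 ρ2 q 0)
        = fun q : Fin 4 → ℝ => q 0 * (1 - q 0 / K1) - a1 * q 0 * q 1 / (1 + q 0) := by
      funext q; simp [model1RHS]
    show fderiv ℝ (fun q : Fin 4 → ℝ => model1RHS r a1 a2 K1 K2 d d ρ1 ρ2 q 0) p
        (Pi.single 0 1) = _
    rw [hf, fderiv_diag0 a1 K1 p h10 hK1.ne']
    simp only [hp0, hp1]
  have e1 : M 1 1 = a1 * μ1 / (1 + μ1) - d +
      ρ1 * (a1 * μ1 * ν2 / (1 + μ1) - a2 * μ2 * ν2 / (1 + μ2)) := by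
    have hf : (fun q : Fin 4 → ℝ => model1RHS r a1 a2 K1 K2 d d ρ1 ρ2 q 1)
        = fun q : Fin 4 → ℝ => a1 * q 0 * q 1 / (1 + q 0) - d * q 1 +
            ρ1 * (a1 * q 0 * q 1 * q 3 / (1 + q 0) - a2 * q 2 * q 1 * q 3 / (1 + q 2)) := by
      funext q; simp [model1RHS]
    show fderiv ℝ (fun q : Fin 4 → ℝ => model1RHS r a1 a2 K1 K2 d d ρ1 ρ2 q 1) p
        (Pi.single 1 1) = _
    rw [hf, fderiv_diag1 a1 a2 d ρ1 p h10 h12]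
    simp only [hp0, hp1, hp2, hp3]
  have e2 : M 2 2 = r - 2 * r * μ2 / K2 - a2 * ν2 / (1 + μ2) ^ 2 := by
    have hf : (fun q : Fin 4 → ℝ => model1RHS r a1 a2 K1 K2 d d ρ1 ρ2 q 2)
        = fun q : Fin 4 → ℝ => r * q 2 * (1 - q 2 / K2) - a2 * q 2 * q 3 / (1 + q 2) := by
      funext q; simp [model1RHS]
    show fderiv ℝ (fun q : Fin 4 → ℝ => model1RHS r a1 a2 K1 K2 d d ρ1 ρ2 q 2) p
        (Pi.single 2 1) = _
    rw [hf, fderiv_diag2 r a2 K2 p h12 hK2.ne']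
    simp only [hp2, hp3]
  have e3 : M 3 3 = a2 * μ2 / (1 + μ2) - d +
      ρ2 * (a2 * μ2 * ν1 / (1 + μ2) - a1 * μ1 * ν1 / (1 + μ1)) := by
    have hf : (fun q : Fin 4 → ℝ => model1RHS r a1 a2 K1 K2 d d ρ1 ρ2 q 3)
        = fun q : Fin 4 → ℝ => a2 * q 2 * q 3 / (1 + q 2) - d * q 3 +
            ρ2 * (a2 * q 2 * q 1 * q 3 / (1 + q 2) - a1 * q 0 * q 1 * q 3 / (1 + q 0)) := by
      funext q; simp [model1RHS]
    show fderiv ℝ (fun q : Fin 4 → ℝ => model1RHS r a1 a2 K1 K2 d d ρ1 ρ2 q 3) p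
        (Pi.single 3 1) = _
    rw [hf, fderiv_diag3 a1 a2 d ρ2 p h10 h12]
    simp only [hp0, hp1, hp2, hp3]
  have htr : M.trace = (1 - 2 * μ1 / K1 - a1 * ν1 / (1 + μ1) ^ 2)
      + (a1 * μ1 / (1 + μ1) - d +
          ρ1 * (a1 * μ1 * ν2 / (1 + μ1) - a2 * μ2 * ν2 / (1 + μ2)))
      + (r - 2 * r * μ2 / K2 - a2 * ν2 / (1 + μ2) ^ 2)
      + (a2 * μ2 / (1 + μ2) - d +
          ρ2 * (a2 * μ2 * ν1 / (1 + μ2) - a1 * μ1 * ν1 / (1 + μ1))) := by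
    rw [Matrix.trace]
    rw [Fin.sum_univ_four]
    simp only [Matrix.diag_apply]
    rw [e0, e1, e2, e3]
  have key : M.trace = μ1 * (K1 * a1 - a1 - K1 * d - d) / (a1 * K1) +
      r * μ2 * (K2 * a2 - a2 - K2 * d - d) / (a2 * K2) := by
    rw [htr]
    have hA1 : a1 - d ≠ 0 := by linarith
    have hA2 : a2 - d ≠ 0 := by linarith
    subst hν1 hν2 hμ1 hμ2
    field_simp [ha1.ne', ha2.ne', hK1.ne', hK2.ne']
    ring
  have htrpos : 0 < M.trace := by rw [key]; exact hunst
  -- spectral argument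
  set Mc := M.map (algebraMap ℝ ℂ) with hMc
  have hchar : M.charpoly.map (algebraMap ℝ ℂ) = Mc.charpoly :=
    (Matrix.charpoly_map M (algebraMap ℝ ℂ)).symm
  have htrc : Mc.trace = (M.trace : ℂ) := by
    simp [hMc, Matrix.trace, Matrix.diag_apply, Matrix.map_apply, Fin.sum_univ_four]
  have hsum : Mc.trace = Mc.charpoly.roots.sum :=
    Matrix.trace_eq_sum_roots_charpoly Mc
  rw [hchar]
  by_contra hcon
  push_neg at hcon
  have hall : ∀ z ∈ Mc.charpoly.roots, z.re ≤ 0 := fun z hz =>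
    hcon z (isRoot_of_mem_roots hz)
  have hsumre : (Mc.charpoly.roots.sum).re = M.trace := by
    rw [← hsum, htrc, Complex.ofReal_re]
  have h0le : 0 ≤ (Mc.charpoly.roots.map (fun z => -z.re)).sum :=
    Multiset.sum_nonneg (fun x hx => by
      obtain ⟨z, hz, rfl⟩ := Multiset.mem_map.1 hx
      have := hall z hz; linarith)
  have hneg : (Mc.charpoly.roots.map (fun z => -z.re)).sum
      = -(Mc.charpoly.roots.sum).re := by
    simpa [Complex.coe_reAddGroupHom] using
      (map_multiset_sum Complex.reAddGroupHom Mc.charpoly.roots).symm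
  rw [hneg, hsumre] at h0le
  linarith
end

section
/- Suppose a_1 = a_2 = a, d_1 = d_2 = d, K_1 = K_2 = K, r = 1, with a > d > 0, and set μ = d/(a − d) and ν = (K − μ)(1 + μ)/(aK). If 0 < μ < K, then (μ, ν, μ, ν) is the unique interior equilibrium of Model (1): it is an interior equilibrium, and any point (x_1, y_1, x_2, y_2) with all four coordinates strictly positive at which all four right-hand sides of Model (1) vanish equals (μ, ν, μ, ν). -/
/-- **Uniqueness of the interior equilibrium in the fully symmetric case.**
Suppose `a₁ = a₂ = a`, `d₁ = d₂ = d`, `K₁ = K₂ = K`, `r = 1`, with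
`a > d > 0`, and set `μ = d/(a − d)`, `ν = (K − μ)(1 + μ)/(aK)`.  If
`0 < μ < K`, then `(μ, ν, μ, ν)` is the unique interior equilibrium of
Model (1). -/
theorem model1_symmetric_unique_interior_equilibrium
    (a K d ρ1 ρ2 : ℝ)
    (ha : 0 < a) (hK : 0 < K) (hd : 0 < d) (hρ1 : 0 ≤ ρ1) (hρ2 : 0 ≤ ρ2)
    (had : d < a)
    (μ ν : ℝ) (hμ : μ = d / (a - d)) (hν : ν = (K - μ) * (1 + μ) / (a * K))
    (hμK : 0 < μ ∧ μ < K) :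
    ((0 < μ ∧ 0 < ν) ∧
      μ * (1 - μ / K) - a * μ * ν / (1 + μ) = 0 ∧
      a * μ * ν / (1 + μ) - d * ν +
        ρ1 * (a * μ * ν * ν / (1 + μ) - a * μ * ν * ν / (1 + μ)) = 0 ∧
      1 * μ * (1 - μ / K) - a * μ * ν / (1 + μ) = 0 ∧
      a * μ * ν / (1 + μ) - d * ν +
        ρ2 * (a * μ * ν * ν / (1 + μ) - a * μ * ν * ν / (1 + μ)) = 0) ∧
    (∀ x1 y1 x2 y2 : ℝ, 0 < x1 → 0 < y1 → 0 < x2 → 0 < y2 →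
      x1 * (1 - x1 / K) - a * x1 * y1 / (1 + x1) = 0 →
      a * x1 * y1 / (1 + x1) - d * y1 +
        ρ1 * (a * x1 * y1 * y2 / (1 + x1) - a * x2 * y1 * y2 / (1 + x2)) = 0 →
      1 * x2 * (1 - x2 / K) - a * x2 * y2 / (1 + x2) = 0 →
      a * x2 * y2 / (1 + x2) - d * y2 +
        ρ2 * (a * x2 * y1 * y2 / (1 + x2) - a * x1 * y1 * y2 / (1 + x1)) = 0 →
      x1 = μ ∧ y1 = ν ∧ x2 = μ ∧ y2 = ν) := by
  obtain ⟨hμ0, hμK'⟩ := hμK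
  have had' : (0:ℝ) < a - d := by linarith
  have hμd : μ * (a - d) = d := by rw [hμ]; field_simp
  have h1μ : (0:ℝ) < 1 + μ := by linarith
  have hν0 : 0 < ν := by
    have hKμ : (0:ℝ) < K - μ := by linarith
    rw [hν]; positivity
  have haμ : a * μ = d * (1 + μ) := by nlinarith [hμd]
  have hνeq : a * K * ν = (K - μ) * (1 + μ) := by
    rw [hν]; field_simp
  constructor
  · refine ⟨⟨hμ0, hν0⟩, ?_, ?_, ?_, ?_⟩
    · field_simp
      nlinarith [hνeq]
    · have : a * μ * ν / (1 + μ) = d * ν := by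
        rw [haμ]; field_simp
      rw [this]; ring
    · field_simp
      nlinarith [hνeq]
    · have : a * μ * ν / (1 + μ) = d * ν := by
        rw [haμ]; field_simp
      rw [this]; ring
  · intro x1 y1 x2 y2 hx1 hy1 hx2 hy2 heq1 heq2 heq3 heq4
    have h1x1 : (0:ℝ) < 1 + x1 := by linarith
    have h1x2 : (0:ℝ) < 1 + x2 := by linarith
    -- cleared predator equations
    have E1 : (a * x1 - d * (1 + x1)) * (1 + x2) + ρ1 * y2 * a * (x1 - x2) = 0 := by
      have key : y1 * ((a * x1 - d * (1 + x1)) * (1 + x2) + ρ1 * y2 * a * (x1 - x2)) * (1 + x1) = 0 := by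
        field_simp at heq2
        linear_combination (1 + x1) * heq2
      have key2 := (mul_eq_zero.mp key).resolve_right h1x1.ne'
      rcases mul_eq_zero.mp key2 with h | h
      · exact absurd h hy1.ne'
      · exact h
    have E2 : (a * x2 - d * (1 + x2)) * (1 + x1) + ρ2 * y1 * a * (x2 - x1) = 0 := by
      have key : y2 * ((a * x2 - d * (1 + x2)) * (1 + x1) + ρ2 * y1 * a * (x2 - x1)) * (1 + x2) = 0 := by
        field_simp at heq4
        linear_combination (1 + x2) * heq4
      have key2 := (mul_eq_zero.mp key).resolve_right h1x2.ne'
      rcases mul_eq_zero.mp key2 with h | h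
      · exact absurd h hy2.ne'
      · exact h
    have hxx : x1 = x2 := by
      rcases lt_trichotomy x1 x2 with h | h | h
      · exfalso
        have ht1 : ρ1 * y2 * a * (x1 - x2) ≤ 0 :=
          mul_nonpos_of_nonneg_of_nonpos (by positivity) (by linarith)
        have ht2 : 0 ≤ ρ2 * y1 * a * (x2 - x1) :=
          mul_nonneg (by positivity) (by linarith)
        have hs1 : 0 ≤ a * x1 - d * (1 + x1) := by
          by_contra hneg
          push_neg at hneg
          have := mul_neg_of_neg_of_pos hneg h1x2
          linarith
        have hs2 : a * x2 - d * (1 + x2) ≤ 0 := by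
          by_contra hneg
          push_neg at hneg
          have := mul_pos hneg h1x1
          linarith
        have hprod : 0 < (a - d) * (x2 - x1) := mul_pos had' (by linarith)
        have hring : a * x2 - d * (1 + x2) - (a * x1 - d * (1 + x1)) = (a - d) * (x2 - x1) := by
          ring
        linarith
      · exact h
      · exfalso
        have ht1 : 0 ≤ ρ1 * y2 * a * (x1 - x2) :=
          mul_nonneg (by positivity) (by linarith)
        have ht2 : ρ2 * y1 * a * (x2 - x1) ≤ 0 :=
          mul_nonpos_of_nonneg_of_nonpos (by positivity) (by linarith)
        have hs1 : a * x1 - d * (1 + x1) ≤ 0 := by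
          by_contra hneg
          push_neg at hneg
          have := mul_pos hneg h1x2
          linarith
        have hs2 : 0 ≤ a * x2 - d * (1 + x2) := by
          by_contra hneg
          push_neg at hneg
          have := mul_neg_of_neg_of_pos hneg h1x1
          linarith
        have hprod : 0 < (a - d) * (x1 - x2) := mul_pos had' (by linarith)
        have hring : a * x1 - d * (1 + x1) - (a * x2 - d * (1 + x2)) = (a - d) * (x1 - x2) := by
          ring
        linarith
    have hfd : a * x1 - d * (1 + x1) = 0 := by
      subst hxx
      have key : (a * x1 - d * (1 + x1)) * (1 + x1) = 0 := by linear_combination E1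
      exact (mul_eq_zero.mp key).resolve_right h1x1.ne'
    have hx1μ : x1 = μ := by
      rw [hμ]; field_simp; linarith [hfd]
    have hx2μ : x2 = μ := hxx ▸ hx1μ
    -- prey equations
    have hy1ν : y1 = ν := by
      have key : x1 * ((K - x1) * (1 + x1) - a * K * y1) = 0 := by
        field_simp at heq1
        linear_combination heq1
      rcases mul_eq_zero.mp key with h | h
      · exact absurd h hx1.ne'
      · rw [hν, hx1μ] at *
        field_simp
        linarith [h]
    have hy2ν : y2 = ν := by
      have key : x2 * ((K - x2) * (1 + x2) - a * K * y2) = 0 := by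
        field_simp at heq3
        linear_combination heq3
      rcases mul_eq_zero.mp key with h | h
      · exact absurd h hx2.ne'
      · rw [hν, hx2μ] at *
        field_simp
        linarith [h]
    exact ⟨hx1μ, hy1ν, hx2μ, hy2ν⟩
end

section
/- Consider the three-dimensional subsystem x_1' = x_1(1 − x_1/K_1) − a_1x_1y_1/(1+x_1), y_1' = a_1x_1y_1/(1+x_1) − d_1y_1 + ρ_1(y_2 − y_1), y_2' = −d_2y_2 − ρ_2(y_2 − y_1), with a_1, K_1, d_1, d_2 > 0 and ρ_1, ρ_2 ≥ 0, and set d̂_1 = d_1 + ρ_1d_2/(d_2 + ρ_2). If a_1K_1/(1+K_1) < d̂_1 (equivalently μ̂_1 = d̂_1/(a_1 − d̂_1) > K_1 when a_1 > d̂_1), then the equilibrium (K_1, 0, 0) is globally asymptotically stable: every solution on [0, ∞) with x_1(0) > 0, y_1(0) ≥ 0, y_2(0) ≥ 0 satisfies (x_1(t), y_1(t), y_2(t)) → (K_1, 0, 0) as t → ∞. -/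
open Filter Set


lemma expUpper {f f' : ℝ → ℝ} {a b c : ℝ}
    (hf : ∀ t ∈ Set.Icc a b, HasDerivAt f (f' t) t)
    (hle : ∀ t ∈ Set.Icc a b, f' t ≤ c * f t)
    {t : ℝ} (ht : t ∈ Set.Icc a b) : f t ≤ f a * Real.exp (c * (t - a)) := by
  set g : ℝ → ℝ := fun s => f s * Real.exp (-(c * s)) with hgdef
  have hg : ∀ s ∈ Set.Icc a b,
      HasDerivAt g ((f' s - c * f s) * Real.exp (-(c * s))) s := by
    intro s hs
    have h1 : HasDerivAt (fun s : ℝ => Real.exp (-(c * s))) (-c * Real.exp (-(c * s))) s := by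
      have h2 : HasDerivAt (fun s : ℝ => -(c * s)) (-c) s := by
        simpa using ((hasDerivAt_id s).const_mul c).fun_neg
      simpa [mul_comm] using h2.exp
    have := (hf s hs).fun_mul h1
    exact this.congr_deriv (by ring)
  have hcont : ContinuousOn g (Set.Icc a b) :=
    fun s hs => ((hg s hs).continuousAt).continuousWithinAt
  have hanti : AntitoneOn g (Set.Icc a b) := by
    apply antitoneOn_of_deriv_nonpos (convex_Icc a b) hcont
    · intro s hs
      rw [interior_Icc] at hs
      exact ((hg s (Set.mem_Icc_of_Ioo hs)).differentiableAt).differentiableWithinAt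
    · intro s hs
      rw [interior_Icc] at hs
      rw [(hg s (Set.mem_Icc_of_Ioo hs)).deriv]
      have h3 : f' s - c * f s ≤ 0 := by linarith [hle s (Set.mem_Icc_of_Ioo hs)]
      exact mul_nonpos_of_nonpos_of_nonneg h3 (Real.exp_pos _).le
  have hab : a ∈ Set.Icc a b := ⟨le_refl a, ht.1.trans ht.2⟩
  have := hanti hab ht ht.1
  have hexp : (0:ℝ) < Real.exp (-(c * t)) := Real.exp_pos _
  rw [hgdef] at this
  simp only at this
  have h4 : f t ≤ f a * (Real.exp (-(c * a)) * Real.exp (c * t)) := by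
    rw [← mul_assoc]
    calc f t = f t * Real.exp (-(c * t)) * Real.exp (c * t) := by
          rw [mul_assoc, ← Real.exp_add]; simp
      _ ≤ f a * Real.exp (-(c * a)) * Real.exp (c * t) := by
          apply mul_le_mul_of_nonneg_right this (Real.exp_pos _).le
  calc f t ≤ f a * (Real.exp (-(c * a)) * Real.exp (c * t)) := h4
    _ = f a * Real.exp (c * (t - a)) := by rw [← Real.exp_add]; ring_nf

lemma expLower {f f' : ℝ → ℝ} {a b c : ℝ}
    (hf : ∀ t ∈ Set.Icc a b, HasDerivAt f (f' t) t)
    (hle : ∀ t ∈ Set.Icc a b, c * f t ≤ f' t)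
    {t : ℝ} (ht : t ∈ Set.Icc a b) : f a * Real.exp (c * (t - a)) ≤ f t := by
  have := expUpper (f := fun s => -f s) (f' := fun s => -f' s) (a := a) (b := b) (c := c)
    (fun s hs => (hf s hs).neg) (fun s hs => by nlinarith [hle s hs]) ht
  simp only [neg_mul] at this
  linarith



lemma stays_le {f f' : ℝ → ℝ} {T B : ℝ}
    (hf : ∀ t ∈ Set.Ici T, HasDerivAt f (f' t) t)
    (hcond : ∀ t ∈ Set.Ici T, B ≤ f t → f' t ≤ 0)
    (h0 : f T ≤ B) : ∀ t, T ≤ t → f t ≤ B := by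
  intro t1 ht1
  by_contra hgt
  push_neg at hgt
  set S : Set ℝ := {s ∈ Set.Icc T t1 | f s ≤ B} with hSdef
  have hSne : S.Nonempty := ⟨T, ⟨le_refl T, ht1⟩, h0⟩
  have hScl : IsClosed S := by
    have hc : ContinuousOn f (Set.Icc T t1) :=
      fun s hs => ((hf s hs.1).continuousAt).continuousWithinAt
    exact hc.preimage_isClosed_of_isClosed isClosed_Icc isClosed_Iic
  have hSbdd : BddAbove S := ⟨t1, fun s hs => hs.1.2⟩
  set τ := sSup S with hτdef
  have hτS : τ ∈ S := hScl.csSup_mem hSne hSbdd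
  have hτT : T ≤ τ := hτS.1.1
  have hτt1 : τ < t1 := lt_of_le_of_ne hτS.1.2 (fun h => by rw [h] at hτS; linarith [hτS.2])
  have hmid : ∀ s, τ < s → s ≤ t1 → B < f s := by
    intro s hs1 hs2
    by_contra hle2
    push_neg at hle2
    have : s ∈ S := ⟨⟨hτT.trans hs1.le, hs2⟩, hle2⟩
    exact absurd (le_csSup hSbdd this) (not_le.mpr hs1)
  -- on [τ, t1], B ≤ f s, so f' ≤ 0
  have hge : ∀ s ∈ Set.Icc τ t1, B ≤ f s := by
    intro s hs
    rcases eq_or_lt_of_le hs.1 with h | h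
    · -- s = τ : show B ≤ f τ via right limit
      rw [← h]
      have hc : ContinuousAt f τ := (hf τ (Set.mem_Ici.mpr hτT)).continuousAt
      have hev : ∀ᶠ z in nhdsWithin τ (Set.Ioi τ), B ≤ f z := by
        filter_upwards [Ioc_mem_nhdsGT hτt1] with z hz
        exact (hmid z hz.1 hz.2).le
      exact ge_of_tendsto (hc.continuousWithinAt.tendsto) hev
    · exact (hmid s h hs.2).le
  have hupper := expUpper (f := f) (f' := f') (a := τ) (b := t1) (c := 0)
    (fun s hs => hf s (Set.mem_Ici.mpr (hτT.trans hs.1)))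
    (fun s hs => by
      simpa using hcond s (Set.mem_Ici.mpr (hτT.trans hs.1)) (hge s hs))
    (Set.right_mem_Icc.mpr hτt1.le)
  simp at hupper
  have : f t1 ≤ B := hupper.trans hτS.2
  linarith

lemma stays_ge {f f' : ℝ → ℝ} {T B : ℝ}
    (hf : ∀ t ∈ Set.Ici T, HasDerivAt f (f' t) t)
    (hcond : ∀ t ∈ Set.Ici T, f t ≤ B → 0 ≤ f' t)
    (h0 : B ≤ f T) : ∀ t, T ≤ t → B ≤ f t := by
  intro t1 ht1
  have := stays_le (f := fun s => -f s) (f' := fun s => -f' s) (T := T) (B := -B)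
    (fun t ht => (hf t ht).neg)
    (fun t ht hB => by
      simp only [neg_nonpos]
      exact hcond t ht (by linarith))
    (by linarith) t1 ht1
  linarith



lemma x1_pos {a1 K1 : ℝ} (hK1 : 0 < K1) {x1 y1 : ℝ → ℝ}
    (hx1 : ∀ t : ℝ, 0 ≤ t → HasDerivAt x1
      (x1 t * (1 - x1 t / K1) - a1 * x1 t * y1 t / (1 + x1 t)) t)
    (hy1c : ∀ t : ℝ, 0 ≤ t → ContinuousAt y1 t)
    (hx10 : 0 < x1 0) : ∀ t : ℝ, 0 ≤ t → 0 < x1 t := by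
  intro t0 ht0
  by_contra hle
  push_neg at hle
  set S : Set ℝ := {s ∈ Set.Icc 0 t0 | x1 s ≤ 0} with hSdef
  have hx1c : ContinuousOn x1 (Set.Icc 0 t0) :=
    fun s hs => ((hx1 s hs.1).continuousAt).continuousWithinAt
  have hSne : S.Nonempty := ⟨t0, ⟨ht0, le_refl _⟩, hle⟩
  have hScl : IsClosed S := hx1c.preimage_isClosed_of_isClosed isClosed_Icc isClosed_Iic
  have hSbdd : BddBelow S := ⟨0, fun s hs => hs.1.1⟩
  set τ := sInf S with hτdef
  have hτS : τ ∈ S := hScl.csInf_mem hSne hSbdd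
  have hτ0 : 0 ≤ τ := hτS.1.1
  have hτt0 : τ ≤ t0 := hτS.1.2
  have hτpos : 0 < τ := by
    rcases eq_or_lt_of_le hτ0 with h | h
    · exfalso; rw [← h] at hτS; linarith [hτS.2]
    · exact h
  have hbefore : ∀ s, 0 ≤ s → s < τ → 0 < x1 s := by
    intro s hs1 hs2
    by_contra h
    push_neg at h
    exact absurd (csInf_le hSbdd ⟨⟨hs1, hs2.le.trans hτt0⟩, h⟩) (not_le.mpr hs2)
  -- x1 τ = 0
  have hx1τ : x1 τ = 0 := by
    have h1 : 0 ≤ x1 τ := by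
      have hc : ContinuousAt x1 τ := (hx1 τ hτ0).continuousAt
      have hev : ∀ᶠ z in nhdsWithin τ (Set.Iio τ), 0 ≤ x1 z := by
        filter_upwards [Ioo_mem_nhdsLT hτpos] with z hz
        exact (hbefore z hz.1.le hz.2).le
      exact ge_of_tendsto (hc.continuousWithinAt.tendsto) hev
    linarith [hτS.2]
  -- nonneg on [0, τ]
  have hnn : ∀ s ∈ Set.Icc 0 τ, 0 ≤ x1 s := by
    intro s hs
    rcases eq_or_lt_of_le hs.2 with h | h
    · rw [h, hx1τ]
    · exact (hbefore s hs.1 h).le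
  -- bounds on [0, τ]
  obtain ⟨C1, hC1⟩ : ∃ C, ∀ s ∈ Set.Icc (0:ℝ) τ, |x1 s| ≤ C := by
    obtain ⟨C, hC⟩ := (isCompact_Icc).exists_bound_of_continuousOn
      (fun s hs => ((hx1 s hs.1).continuousAt).continuousWithinAt)
    exact ⟨C, fun s hs => by simpa using hC s hs⟩
  obtain ⟨C2, hC2⟩ : ∃ C, ∀ s ∈ Set.Icc (0:ℝ) τ, |y1 s| ≤ C := by
    obtain ⟨C, hC⟩ := (isCompact_Icc).exists_bound_of_continuousOn
      (fun s (hs : s ∈ Set.Icc (0:ℝ) τ) => (hy1c s hs.1).continuousWithinAt)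
    exact ⟨C, fun s hs => by simpa using hC s hs⟩
  set M : ℝ := C1 / K1 + |a1| * C2 + 1 with hMdef
  have hM : ∀ s ∈ Set.Icc 0 τ, (-M) * x1 s ≤
      x1 s * (1 - x1 s / K1) - a1 * x1 s * y1 s / (1 + x1 s) := by
    intro s hs
    have h0x := hnn s hs
    have h1x : (1:ℝ) ≤ 1 + x1 s := by linarith
    have hb2 : |y1 s| ≤ C2 := hC2 s hs
    have habs1 : x1 s ≤ C1 := (le_abs_self _).trans (hC1 s hs)
    have hterm : a1 * x1 s * y1 s / (1 + x1 s) ≤ |a1| * C2 * x1 s := by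
      have h2 : a1 * x1 s * y1 s / (1 + x1 s) ≤ |a1 * x1 s * y1 s / (1 + x1 s)| := le_abs_self _
      have h3 : |a1 * x1 s * y1 s / (1 + x1 s)| = |a1| * |x1 s| * |y1 s| / |1 + x1 s| := by
        rw [abs_div, abs_mul, abs_mul]
      have h4 : |a1| * |x1 s| * |y1 s| / |1 + x1 s| ≤ |a1| * |x1 s| * |y1 s| := by
        apply div_le_self (by positivity)
        rw [abs_of_pos (by linarith : (0:ℝ) < 1 + x1 s)]; linarith
      have h5 : |a1| * |x1 s| * |y1 s| ≤ |a1| * C2 * x1 s := by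
        rw [abs_of_nonneg h0x]
        nlinarith [mul_le_mul_of_nonneg_left hb2 (mul_nonneg (abs_nonneg a1) h0x)]
      linarith [h2, h3 ▸ h4]
    have hbr : x1 s * (1 - C1 / K1) ≤ x1 s * (1 - x1 s / K1) := by
      apply mul_le_mul_of_nonneg_left _ h0x
      have : x1 s / K1 ≤ C1 / K1 := by gcongr
      linarith
    have hMx : M * x1 s = (C1 / K1) * x1 s + |a1| * C2 * x1 s + x1 s := by
      rw [hMdef]; ring
    nlinarith [hbr, hterm, h0x]
  have hlow := expLower (f := x1)
    (f' := fun s => x1 s * (1 - x1 s / K1) - a1 * x1 s * y1 s / (1 + x1 s))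
    (a := 0) (b := τ) (c := -M)
    (fun s hs => hx1 s hs.1)
    (fun s hs => by simpa using hM s hs)
    (Set.right_mem_Icc.mpr hτ0)
  rw [hx1τ] at hlow
  simp only [sub_zero] at hlow
  nlinarith [Real.exp_pos (-M * τ), hlow]

lemma neg_before {g : ℝ → ℝ} {D τ : ℝ} (hg : HasDerivAt g D τ) (hD : 0 < D)
    (hgτ : g τ = 0) (hτ : 0 < τ) : ∃ s, 0 < s ∧ s < τ ∧ g s < 0 := by
  have hslope := hasDerivAt_iff_tendsto_slope.mp hg
  have hev : ∀ᶠ s in nhdsWithin τ {τ}ᶜ, 0 < slope g τ s :=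
    hslope.eventually (eventually_gt_nhds hD)
  have hmono : nhdsWithin τ (Set.Iio τ) ≤ nhdsWithin τ {τ}ᶜ :=
    nhdsWithin_mono τ (fun x hx => ne_of_lt hx)
  have hev2 : ∀ᶠ s in nhdsWithin τ (Set.Iio τ), 0 < slope g τ s := hmono hev
  have hev3 : ∀ᶠ s in nhdsWithin τ (Set.Iio τ), s ∈ Set.Ioo 0 τ :=
    eventually_of_mem (Ioo_mem_nhdsLT hτ) (fun s hs => hs)
  obtain ⟨s, hs1, hs2⟩ := (hev2.and hev3).exists
  refine ⟨s, hs2.1, hs2.2, ?_⟩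
  rw [slope_def_field] at hs1
  have hnum : 0 > g s - g τ := by
    by_contra hn
    push_neg at hn
    have : (g s - g τ) / (s - τ) ≤ 0 :=
      div_nonpos_of_nonneg_of_nonpos hn (by linarith [hs2.2])
    linarith
  linarith [hgτ, hnum]

lemma y_nonneg {a1 d1 d2 ρ1 ρ2 : ℝ}
    (ha1 : 0 < a1) (hd1 : 0 < d1) (hd2 : 0 < d2) (hρ1 : 0 ≤ ρ1) (hρ2 : 0 ≤ ρ2)
    {x1 y1 y2 : ℝ → ℝ}
    (hy1 : ∀ t : ℝ, 0 ≤ t → HasDerivAt y1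
      (a1 * x1 t * y1 t / (1 + x1 t) - d1 * y1 t + ρ1 * (y2 t - y1 t)) t)
    (hy2 : ∀ t : ℝ, 0 ≤ t → HasDerivAt y2
      (-(d2 * y2 t) - ρ2 * (y2 t - y1 t)) t)
    (hxpos : ∀ t : ℝ, 0 ≤ t → 0 < x1 t)
    (hy10 : 0 ≤ y1 0) (hy20 : 0 ≤ y2 0) :
    ∀ t : ℝ, 0 ≤ t → 0 ≤ y1 t ∧ 0 ≤ y2 t := by
  set L : ℝ := a1 + d1 + d2 + 2*ρ1 + 2*ρ2 + 1 with hLdef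
  have hL : 0 < L := by rw [hLdef]; positivity
  clear_value L
  have claim : ∀ ε > (0:ℝ), ∀ t0, 0 ≤ t0 →
      -(ε * Real.exp (L * t0)) ≤ y1 t0 ∧ -(ε * Real.exp (L * t0)) ≤ y2 t0 := by
    intro ε hε t0 ht0
    set g1 : ℝ → ℝ := fun t => y1 t + ε * Real.exp (L * t) with hg1def
    set g2 : ℝ → ℝ := fun t => y2 t + ε * Real.exp (L * t) with hg2def
    set h : ℝ → ℝ := fun t => min (g1 t) (g2 t) with hhdef
    -- derivative of the exponential part
    have hexp : ∀ τ : ℝ, HasDerivAt (fun t => ε * Real.exp (L * t))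
        (ε * (Real.exp (L * τ) * L)) τ := by
      intro τ
      have h1 : HasDerivAt (fun t : ℝ => L * t) L τ := by
        simpa using (hasDerivAt_id τ).const_mul L
      exact h1.exp.const_mul ε
    suffices hsuff : ∀ s ∈ Set.Icc 0 t0, 0 ≤ h s by
      have := hsuff t0 ⟨ht0, le_refl _⟩
      constructor
      · have : h t0 ≤ g1 t0 := min_le_left _ _
        have h2 := hsuff t0 ⟨ht0, le_refl _⟩
        simp only [hg1def] at this
        linarith
      · have : h t0 ≤ g2 t0 := min_le_right _ _
        have h2 := hsuff t0 ⟨ht0, le_refl _⟩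
        simp only [hg2def] at this
        linarith
    by_contra hbad
    push_neg at hbad
    obtain ⟨tb, htb, htbneg⟩ := hbad
    set S : Set ℝ := {s ∈ Set.Icc 0 t0 | h s < 0} with hSdef
    have hSne : S.Nonempty := ⟨tb, htb, htbneg⟩
    have hSbdd : BddBelow S := ⟨0, fun s hs => hs.1.1⟩
    set τ := sInf S with hτdef
    have hτ0 : 0 ≤ τ := le_csInf hSne (fun s hs => hs.1.1)
    have hτt0 : τ ≤ t0 := (csInf_le hSbdd hSne.choose_spec).trans
      hSne.choose_spec.1.2
    -- continuity of h at any point ≥ 0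
    have hcont : ∀ s : ℝ, 0 ≤ s → ContinuousAt h s := by
      intro s hs
      have c1 : ContinuousAt g1 s := ((hy1 s hs).continuousAt).add (hexp s).continuousAt
      have c2 : ContinuousAt g2 s := ((hy2 s hs).continuousAt).add (hexp s).continuousAt
      exact c1.min c2
    -- h τ ≤ 0
    have hhτle : h τ ≤ 0 := by
      by_contra hpos
      push_neg at hpos
      have := (hcont τ hτ0).eventually (eventually_gt_nhds hpos)
      rw [Metric.eventually_nhds_iff] at this
      obtain ⟨δ, hδ, hball⟩ := this
      obtain ⟨s, hsS, hslt⟩ := exists_lt_of_csInf_lt hSne (lt_add_of_pos_right τ hδ)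
      have hsτ : τ ≤ s := csInf_le hSbdd hsS
      have : 0 < h s := hball (by rw [Real.dist_eq]; rw [abs_lt]; constructor <;> linarith)
      linarith [hsS.2]
    -- good before τ
    have hgood : ∀ s, 0 ≤ s → s < τ → 0 ≤ h s := by
      intro s hs1 hs2
      by_contra hn
      push_neg at hn
      exact absurd (csInf_le hSbdd ⟨⟨hs1, hs2.le.trans hτt0⟩, hn⟩) (not_le.mpr hs2)
    -- τ > 0
    have hτpos : 0 < τ := by
      rcases eq_or_lt_of_le hτ0 with hh | hh
      · exfalso
        have h0pos : 0 < h 0 := by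
          simp only [hhdef, hg1def, hg2def, lt_min_iff, mul_zero, Real.exp_zero, mul_one]
          constructor <;> linarith
        rw [← hh] at hhτle
        linarith
      · exact hh
    -- h τ ≥ 0 by left limit
    have hhτge : 0 ≤ h τ := by
      have hev : ∀ᶠ z in nhdsWithin τ (Set.Iio τ), 0 ≤ h z := by
        filter_upwards [Ioo_mem_nhdsLT hτpos] with z hz
        exact hgood z hz.1.le hz.2
      exact ge_of_tendsto ((hcont τ hτ0).continuousWithinAt.tendsto) hev
    have hhτ : h τ = 0 := le_antisymm hhτle hhτge
    clear_value τ
    clear_value h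
    clear hτdef hSdef hSne hSbdd S
    have hg1τge : 0 ≤ g1 τ := le_trans hhτge (by simp only [hhdef]; exact min_le_left _ _)
    have hg2τge : 0 ≤ g2 τ := le_trans hhτge (by simp only [hhdef]; exact min_le_right _ _)
    set E := Real.exp (L * τ) with hEdef
    have hE : 0 < E := by rw [hEdef]; exact Real.exp_pos _
    clear_value E
    have hx1τ : 0 < x1 τ := hxpos τ hτ0
    -- one of g1 τ, g2 τ equals 0
    have hcase : g1 τ = 0 ∨ g2 τ = 0 := by
      rcases le_total (g1 τ) (g2 τ) with hc | hc
      · left; rw [hhdef] at hhτ; simp only [min_eq_left hc] at hhτ; exact hhτ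
      · right; rw [hhdef] at hhτ; simp only [min_eq_right hc] at hhτ; exact hhτ
    rcases hcase with hc | hc
    · -- g1 τ = 0 : y1 τ = -εE
      have hy1τ : y1 τ = -(ε * E) := by
        simp only [hg1def] at hc; rw [← hEdef] at hc; linarith
      have hy2τ : -(ε * E) ≤ y2 τ := by
        simp only [hg2def] at hg2τge; rw [← hEdef] at hg2τge; linarith
      set D := (a1 * x1 τ * y1 τ / (1 + x1 τ) - d1 * y1 τ + ρ1 * (y2 τ - y1 τ))
        + ε * (Real.exp (L * τ) * L) with hDdef
      have hg1d : HasDerivAt g1 D τ := (hy1 τ hτ0).add (hexp τ)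
      clear_value D
      have hDpos : 0 < D := by
        have hb0 : 0 ≤ a1 * x1 τ / (1 + x1 τ) := by positivity
        have hba : a1 * x1 τ / (1 + x1 τ) ≤ a1 := by
          rw [div_le_iff₀ (by linarith)]
          nlinarith
        have hrw : a1 * x1 τ * y1 τ / (1 + x1 τ) = (a1 * x1 τ / (1 + x1 τ)) * y1 τ := by
          ring
        rw [hDdef, hrw, hy1τ]
        have h1 : (a1 * x1 τ / (1 + x1 τ)) * (-(ε * E)) ≥ a1 * (-(ε * E)) := by
          nlinarith [mul_le_mul_of_nonneg_right hba (mul_pos hε hE).le]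
        have h2 : 0 ≤ ρ1 * (y2 τ + ε * E) := by
          apply mul_nonneg hρ1; linarith
        have h3 : a1 + 1 ≤ L := by rw [hLdef]; linarith
        rw [← hEdef]
        nlinarith [h1, h2, mul_le_mul_of_nonneg_right h3 (mul_pos hε hE).le,
          mul_nonneg hd1.le (mul_pos hε hE).le]
      obtain ⟨s, hs0, hsτ, hsneg⟩ := neg_before hg1d hDpos hc hτpos
      have := hgood s hs0.le hsτ
      have : h s ≤ g1 s := by simp only [hhdef]; exact min_le_left _ _
      linarith [hgood s hs0.le hsτ]
    · -- g2 τ = 0 : y2 τ = -εE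
      have hy2τ : y2 τ = -(ε * E) := by
        simp only [hg2def] at hc; rw [← hEdef] at hc; linarith
      have hy1τ : -(ε * E) ≤ y1 τ := by
        simp only [hg1def] at hg1τge; rw [← hEdef] at hg1τge; linarith
      set D := (-(d2 * y2 τ) - ρ2 * (y2 τ - y1 τ)) + ε * (Real.exp (L * τ) * L) with hDdef
      have hg2d : HasDerivAt g2 D τ := (hy2 τ hτ0).add (hexp τ)
      clear_value D
      have hDpos : 0 < D := by
        rw [hDdef, hy2τ, ← hEdef]
        have h2 : 0 ≤ ρ2 * (y1 τ + ε * E) := by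
          apply mul_nonneg hρ2; linarith
        have hp : 0 < ε * (E * L) := mul_pos hε (mul_pos hE hL)
        have hq : 0 ≤ d2 * (ε * E) := mul_nonneg hd2.le (mul_pos hε hE).le
        linarith [h2, hp, hq]
      obtain ⟨s, hs0, hsτ, hsneg⟩ := neg_before hg2d hDpos hc hτpos
      have : h s ≤ g2 s := by simp only [hhdef]; exact min_le_right _ _
      linarith [hgood s hs0.le hsτ]
  -- conclude
  intro t ht
  constructor
  · by_contra hn
    push_neg at hn
    have hEt : 0 < Real.exp (L * t) := Real.exp_pos _
    have := (claim (-y1 t / (2 * Real.exp (L * t)))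
      (div_pos (by linarith) (by positivity)) t ht).1
    rw [div_mul_eq_mul_div, mul_comm] at this
    have h2 : -(Real.exp (L * t) * -y1 t / (2 * Real.exp (L * t))) = y1 t / 2 := by
      field_simp
    rw [h2] at this
    linarith
  · by_contra hn
    push_neg at hn
    have hEt : 0 < Real.exp (L * t) := Real.exp_pos _
    have := (claim (-y2 t / (2 * Real.exp (L * t)))
      (div_pos (by linarith) (by positivity)) t ht).2
    rw [div_mul_eq_mul_div, mul_comm] at this
    have h2 : -(Real.exp (L * t) * -y2 t / (2 * Real.exp (L * t))) = y2 t / 2 := by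
      field_simp
    rw [h2] at this
    linarith

set_option maxHeartbeats 1000000 in
/-- **Global stability of `(K₁, 0, 0)` for the three-dimensional subsystem of
the classical two-patch model (2).**  If `a₁K₁/(1+K₁) < d̂₁`, where
`d̂₁ = d₁ + ρ₁d₂/(d₂ + ρ₂)`, then every solution of the subsystem with
`x₁(0) > 0`, `y₁(0) ≥ 0`, `y₂(0) ≥ 0` converges to `(K₁, 0, 0)` as `t → ∞`. -/
theorem subsystem_global_stability_predator_free
    (a1 K1 d1 d2 ρ1 ρ2 : ℝ)
    (ha1 : 0 < a1) (hK1 : 0 < K1) (hd1 : 0 < d1) (hd2 : 0 < d2)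
    (hρ1 : 0 ≤ ρ1) (hρ2 : 0 ≤ ρ2)
    (hcond : a1 * K1 / (1 + K1) < d1 + ρ1 * d2 / (d2 + ρ2))
    (x1 y1 y2 : ℝ → ℝ)
    (hx1 : ∀ t : ℝ, 0 ≤ t → HasDerivAt x1
      (x1 t * (1 - x1 t / K1) - a1 * x1 t * y1 t / (1 + x1 t)) t)
    (hy1 : ∀ t : ℝ, 0 ≤ t → HasDerivAt y1
      (a1 * x1 t * y1 t / (1 + x1 t) - d1 * y1 t + ρ1 * (y2 t - y1 t)) t)
    (hy2 : ∀ t : ℝ, 0 ≤ t → HasDerivAt y2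
      (-(d2 * y2 t) - ρ2 * (y2 t - y1 t)) t)
    (hx10 : 0 < x1 0) (hy10 : 0 ≤ y1 0) (hy20 : 0 ≤ y2 0) :
    Tendsto x1 atTop (nhds K1) ∧ Tendsto y1 atTop (nhds 0) ∧
      Tendsto y2 atTop (nhds 0) := by
  have hP : (0:ℝ) < d2 + ρ2 := by linarith
  have hxpos : ∀ t : ℝ, 0 ≤ t → 0 < x1 t :=
    x1_pos hK1 hx1 (fun t ht => (hy1 t ht).continuousAt) hx10
  have hynn := y_nonneg ha1 hd1 hd2 hρ1 hρ2 hy1 hy2 hxpos hy10 hy20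
  have hy1nn : ∀ t : ℝ, 0 ≤ t → 0 ≤ y1 t := fun t ht => (hynn t ht).1
  have hy2nn : ∀ t : ℝ, 0 ≤ t → 0 ≤ y2 t := fun t ht => (hynn t ht).2
  -- eventual upper bound for x1
  have hupper : ∀ ε : ℝ, 0 < ε → ∃ T, 0 ≤ T ∧ ∀ t, T ≤ t → x1 t ≤ K1 + ε := by
    intro ε hε
    have hkey : ∀ t : ℝ, 0 ≤ t → K1 + ε ≤ x1 t →
        x1 t * (1 - x1 t / K1) - a1 * x1 t * y1 t / (1 + x1 t) ≤ 0 := by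
      intro t ht hBt
      have hxp := hxpos t ht
      have hterm : 0 ≤ a1 * x1 t * y1 t / (1 + x1 t) :=
        div_nonneg (mul_nonneg (mul_nonneg ha1.le hxp.le) (hy1nn t ht)) (by linarith)
      have hfirst : x1 t * (1 - x1 t / K1) ≤ 0 := by
        apply mul_nonpos_of_nonneg_of_nonpos hxp.le
        have : (1:ℝ) ≤ x1 t / K1 := by
          rw [le_div_iff₀ hK1]; linarith
        linarith
      linarith
    by_cases hex : ∃ T, 0 ≤ T ∧ x1 T ≤ K1 + ε
    · obtain ⟨T, hT0, hTB⟩ := hex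
      refine ⟨T, hT0, ?_⟩
      intro t ht
      exact stays_le (f' := fun s => x1 s * (1 - x1 s / K1) - a1 * x1 s * y1 s / (1 + x1 s))
        (fun s hs => hx1 s (hT0.trans hs))
        (fun s hs hBs => hkey s (hT0.trans hs) hBs) hTB t ht
    · exfalso
      push_neg at hex
      set δ0 : ℝ := ε * (K1 + ε) / K1 with hδ0def
      have hδ0 : 0 < δ0 := by rw [hδ0def]; positivity
      have hstrict : ∀ t : ℝ, 0 ≤ t →
          x1 t * (1 - x1 t / K1) - a1 * x1 t * y1 t / (1 + x1 t) ≤ -δ0 := by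
        intro t ht
        have hBt := (hex t ht).le
        have hxp := hxpos t ht
        have hterm : 0 ≤ a1 * x1 t * y1 t / (1 + x1 t) :=
          div_nonneg (mul_nonneg (mul_nonneg ha1.le hxp.le) (hy1nn t ht)) (by linarith)
        have hfirst : x1 t * (1 - x1 t / K1) ≤ -δ0 := by
          have hrw : x1 t * (1 - x1 t / K1) = x1 t * (K1 - x1 t) / K1 := by
            rw [eq_div_iff hK1.ne']
            field_simp
          rw [hrw, hδ0def]
          rw [show -(ε * (K1 + ε) / K1) = (-(ε * (K1 + ε))) / K1 by ring]
          rw [div_le_div_iff₀ hK1 hK1]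
          nlinarith [mul_nonneg (by linarith : (0:ℝ) ≤ x1 t - (K1 + ε)) (by linarith : (0:ℝ) ≤ x1 t + ε)]
        linarith
      -- x1 decreases at rate δ0 forever : contradiction
      set Tb : ℝ := (x1 0 + 1) / δ0 with hTbdef
      have hTb : 0 ≤ Tb := by rw [hTbdef]; positivity
      have hup := expUpper (f := fun s => x1 s + δ0 * s)
        (f' := fun s => (x1 s * (1 - x1 s / K1) - a1 * x1 s * y1 s / (1 + x1 s)) + δ0)
        (a := 0) (b := Tb) (c := 0)
        (fun s hs => (hx1 s hs.1).add
          (by simpa using (hasDerivAt_id s).const_mul δ0 :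
            HasDerivAt (fun y : ℝ => δ0 * y) δ0 s))
        (fun s hs => by
          simp only [zero_mul]
          linarith [hstrict s hs.1])
        (Set.right_mem_Icc.mpr hTb)
      simp only [mul_zero, add_zero, zero_mul, Real.exp_zero, mul_one] at hup
      have hx1Tb : K1 + ε < x1 Tb := hex Tb hTb
      have hTbval : δ0 * Tb = x1 0 + 1 := by
        rw [hTbdef]; field_simp
      nlinarith [hup, hx1Tb, hTbval]
  -- Lyapunov function decay
  set dh : ℝ := d1 + ρ1 * d2 / (d2 + ρ2) with hdhdef
  clear_value dh
  set δ : ℝ := (dh - a1 * K1 / (1 + K1)) / 2 with hδdef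
  have hδ : 0 < δ := by rw [hδdef]; linarith [hcond]
  set ε0 : ℝ := δ / (a1 + 1) with hε0def
  have hε0 : 0 < ε0 := by rw [hε0def]; positivity
  obtain ⟨T1, hT10, hT1⟩ := hupper ε0 hε0
  have hq : 0 < a1 * K1 / (1 + K1) := by positivity
  have hbb : ∀ t : ℝ, T1 ≤ t → a1 * x1 t / (1 + x1 t) ≤ dh - δ := by
    intro t ht
    have ht0 : 0 ≤ t := hT10.trans ht
    have hx := hxpos t ht0
    have hxb := hT1 t ht
    have h1 : a1 * x1 t / (1 + x1 t) ≤ a1 * (K1 + ε0) / (1 + (K1 + ε0)) := by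
      rw [div_le_div_iff₀ (by linarith) (by linarith)]
      nlinarith
    have h2 : a1 * (K1 + ε0) / (1 + (K1 + ε0)) ≤ dh - δ := by
      rw [div_le_iff₀ (by linarith : (0:ℝ) < 1 + (K1 + ε0))]
      have hqid : (a1 * K1 / (1 + K1)) * (1 + K1) = a1 * K1 := by
        field_simp
      have hδid : dh - a1 * K1 / (1 + K1) = 2 * δ := by rw [hδdef]; ring
      have hε0id : ε0 * (a1 + 1) = δ := by rw [hε0def]; field_simp
      have e1 : a1 * ε0 = δ - ε0 := by linarith [hε0id]
      have e2 : dh = a1 * K1 / (1 + K1) + 2 * δ := by linarith [hδid]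
      have e3 : (dh - δ) * (1 + (K1 + ε0))
          = (a1 * K1 / (1 + K1) + δ) * (1 + (K1 + ε0)) := by rw [e2]; ring
      have e4 : (a1 * K1 / (1 + K1) + δ) * (1 + (K1 + ε0))
          = a1 * K1 / (1 + K1) * (1 + K1) + a1 * K1 / (1 + K1) * ε0
            + δ * (1 + (K1 + ε0)) := by ring
      have e5 : 0 ≤ a1 * K1 / (1 + K1) * ε0 := by positivity
      have e6 : δ ≤ δ * (1 + (K1 + ε0)) := by
        nlinarith [mul_pos hδ hK1, mul_pos hδ hε0]
      linarith [e1, e3, e4, hqid, e5, e6]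
    linarith
  clear_value δ ε0
  clear hδdef hε0def
  -- constants for the Lyapunov function
  set η : ℝ := δ * (d2 + ρ2) / (2 * (ρ2 + 1)) with hηdef
  have hη : 0 < η := by rw [hηdef]; positivity
  have hηid : η * (2 * (ρ2 + 1)) = δ * (d2 + ρ2) := by rw [hηdef]; field_simp
  clear_value η
  clear hηdef
  set c : ℝ := (ρ1 + η) / (d2 + ρ2) with hcdef
  have hc : 0 < c := by rw [hcdef]; positivity
  have hcid : c * (d2 + ρ2) = ρ1 + η := by rw [hcdef]; field_simp
  clear_value c
  clear hcdef
  set lam : ℝ := min (δ / 2) (η / c) with hlamdef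
  have hlam : 0 < lam := by rw [hlamdef]; exact lt_min (by linarith) (by positivity)
  have hlam1 : lam ≤ δ / 2 := by rw [hlamdef]; exact min_le_left _ _
  have hlam2 : lam * c ≤ η := by
    have h := min_le_right (δ / 2) (η / c)
    rw [← hlamdef] at h
    calc lam * c ≤ (η / c) * c := mul_le_mul_of_nonneg_right h hc.le
      _ = η := by field_simp
  clear_value lam
  clear hlamdef
  -- derivative of V = y1 + c y2
  have hVd : ∀ t : ℝ, 0 ≤ t → HasDerivAt (fun s => y1 s + c * y2 s)
      ((a1 * x1 t * y1 t / (1 + x1 t) - d1 * y1 t + ρ1 * (y2 t - y1 t))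
        + c * (-(d2 * y2 t) - ρ2 * (y2 t - y1 t))) t :=
    fun t ht => (hy1 t ht).add ((hy2 t ht).const_mul c)
  have hVineq : ∀ t : ℝ, T1 ≤ t →
      (a1 * x1 t * y1 t / (1 + x1 t) - d1 * y1 t + ρ1 * (y2 t - y1 t))
        + c * (-(d2 * y2 t) - ρ2 * (y2 t - y1 t)) ≤ -lam * (y1 t + c * y2 t) := by
    intro t ht
    have ht0 : 0 ≤ t := hT10.trans ht
    have hx := hxpos t ht0
    have hy1n := hy1nn t ht0
    have hy2n := hy2nn t ht0
    have hb := hbb t ht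
    have hrw : (a1 * x1 t * y1 t / (1 + x1 t) - d1 * y1 t + ρ1 * (y2 t - y1 t))
        + c * (-(d2 * y2 t) - ρ2 * (y2 t - y1 t))
        = (a1 * x1 t / (1 + x1 t) - d1 - ρ1 + c * ρ2) * y1 t
          + (ρ1 - c * (d2 + ρ2)) * y2 t := by
      field_simp
      ring
    rw [hrw]
    have hcoeff2 : ρ1 - c * (d2 + ρ2) = -η := by linarith [hcid]
    have hcoeff1 : a1 * x1 t / (1 + x1 t) - d1 - ρ1 + c * ρ2 ≤ -(δ / 2) := by
      have hrid : (ρ1 * d2 / (d2 + ρ2)) * (d2 + ρ2) = ρ1 * d2 := by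
        field_simp
      have h5 : ((ρ1 * d2 / (d2 + ρ2)) - ρ1 + c * ρ2) * (d2 + ρ2) = η * ρ2 := by
        linear_combination hrid + ρ2 * hcid
      have h6 : η * ρ2 ≤ δ / 2 * (d2 + ρ2) := by linarith [hηid, hη]
      have hbd : a1 * x1 t / (1 + x1 t) ≤ d1 + ρ1 * d2 / (d2 + ρ2) - δ := by
        rw [hdhdef] at hb; linarith
      have h7 : ρ1 * d2 / (d2 + ρ2) - ρ1 + c * ρ2 ≤ δ / 2 := by
        have h8 : (ρ1 * d2 / (d2 + ρ2) - ρ1 + c * ρ2) * (d2 + ρ2)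
            ≤ (δ / 2) * (d2 + ρ2) := by linarith [h5, h6]
        exact le_of_mul_le_mul_right h8 hP
      linarith [hbd, h7]
    have t1 : (a1 * x1 t / (1 + x1 t) - d1 - ρ1 + c * ρ2) * y1 t ≤ -lam * y1 t := by
      apply mul_le_mul_of_nonneg_right _ hy1n
      linarith
    have t2 : (ρ1 - c * (d2 + ρ2)) * y2 t ≤ -(lam * c) * y2 t := by
      rw [hcoeff2]
      apply mul_le_mul_of_nonneg_right _ hy2n
      linarith
    nlinarith [t1, t2]
  -- exponential decay of V
  set C0 : ℝ := y1 T1 + c * y2 T1 with hC0def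
  have hVbound : ∀ t : ℝ, T1 ≤ t →
      y1 t + c * y2 t ≤ C0 * Real.exp (-lam * (t - T1)) := by
    intro t ht
    exact expUpper (f := fun s => y1 s + c * y2 s)
      (f' := fun s => (a1 * x1 s * y1 s / (1 + x1 s) - d1 * y1 s + ρ1 * (y2 s - y1 s))
        + c * (-(d2 * y2 s) - ρ2 * (y2 s - y1 s)))
      (a := T1) (b := t) (c := -lam)
      (fun s hs => hVd s (hT10.trans hs.1))
      (fun s hs => hVineq s hs.1)
      (Set.right_mem_Icc.mpr ht)
  have hexp0 : Tendsto (fun t : ℝ => C0 * Real.exp (-lam * (t - T1))) atTop (nhds 0) := by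
    have h1 : Tendsto (fun t : ℝ => lam * (t - T1)) atTop atTop :=
      Tendsto.const_mul_atTop hlam (tendsto_atTop_add_const_right _ _ tendsto_id)
    have h2 : Tendsto (fun t : ℝ => Real.exp (-(lam * (t - T1)))) atTop (nhds 0) :=
      Real.tendsto_exp_neg_atTop_nhds_zero.comp h1
    have h3 := h2.const_mul C0
    simpa [neg_mul, mul_zero] using h3
  have hy1tend : Tendsto y1 atTop (nhds 0) := by
    apply squeeze_zero' (g := fun t => C0 * Real.exp (-lam * (t - T1)))
    · filter_upwards [eventually_ge_atTop (0:ℝ)] with t ht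
      exact hy1nn t ht
    · filter_upwards [eventually_ge_atTop T1] with t ht
      have := hVbound t ht
      have h2 : 0 ≤ c * y2 t := mul_nonneg hc.le (hy2nn t (hT10.trans ht))
      linarith
    · exact hexp0
  have hy2tend : Tendsto y2 atTop (nhds 0) := by
    apply squeeze_zero' (g := fun t => (1 / c) * (C0 * Real.exp (-lam * (t - T1))))
    · filter_upwards [eventually_ge_atTop (0:ℝ)] with t ht
      exact hy2nn t ht
    · filter_upwards [eventually_ge_atTop T1] with t ht
      have hV := hVbound t ht
      have h2 : 0 ≤ y1 t := hy1nn t (hT10.trans ht)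
      have h3 : c * y2 t ≤ C0 * Real.exp (-lam * (t - T1)) := by linarith
      show y2 t ≤ 1 / c * (C0 * Real.exp (-lam * (t - T1)))
      rw [← mul_le_mul_iff_right₀ hc]
      calc c * y2 t ≤ C0 * Real.exp (-lam * (t - T1)) := h3
        _ = c * (1 / c * (C0 * Real.exp (-lam * (t - T1)))) := by
            field_simp
      -- done
    · simpa [mul_zero] using hexp0.const_mul (1 / c)
  -- y1 eventually small
  have hy1small : ∀ η' : ℝ, 0 < η' → ∃ T, 0 ≤ T ∧ ∀ t, T ≤ t → y1 t ≤ η' := by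
    intro η' hη'
    have hev := hy1tend.eventually_lt_const hη'
    rw [eventually_atTop] at hev
    obtain ⟨T, hT⟩ := hev
    exact ⟨max T 0, le_max_right _ _, fun t ht => (hT t ((le_max_left _ _).trans ht)).le⟩
  -- x1 eventually ≥ K1 - ε
  have hlower : ∀ ε : ℝ, 0 < ε → ∃ T, 0 ≤ T ∧ ∀ t, T ≤ t → K1 - ε ≤ x1 t := by
    intro ε hε
    set εm : ℝ := min ε (K1 / 2) with hεmdef
    have hεm : 0 < εm := lt_min hε (by linarith)
    have hεmK : εm ≤ K1 / 2 := min_le_right _ _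
    have hεme : εm ≤ ε := min_le_left _ _
    clear_value εm
    set η' : ℝ := εm / (2 * K1 * a1) with hη'def
    have hη' : 0 < η' := by rw [hη'def]; positivity
    have hη'id : a1 * η' = εm / (2 * K1) := by
      rw [hη'def]
      field_simp
    clear_value η'
    set σ : ℝ := εm / (2 * K1) with hσdef
    have hσ : 0 < σ := by rw [hσdef]; positivity
    set L' : ℝ := K1 - εm with hL'def
    have hL' : 0 < L' := by rw [hL'def]; linarith
    obtain ⟨T0, hT00, hT0⟩ := hy1small η' hη'
    have hkey : ∀ t : ℝ, T0 ≤ t → x1 t ≤ L' →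
        σ * x1 t ≤ x1 t * (1 - x1 t / K1) - a1 * x1 t * y1 t / (1 + x1 t) := by
      intro t ht hxL
      have ht0 : 0 ≤ t := hT00.trans ht
      have hx := hxpos t ht0
      have hyn := hy1nn t ht0
      have hys := hT0 t ht
      have hA : a1 * x1 t * y1 t / (1 + x1 t) ≤ a1 * x1 t * η' := by
        calc a1 * x1 t * y1 t / (1 + x1 t) ≤ a1 * x1 t * y1 t := by
              apply div_le_self (mul_nonneg (mul_nonneg ha1.le hx.le) hyn) (by linarith)
          _ ≤ a1 * x1 t * η' :=
              mul_le_mul_of_nonneg_left hys (mul_nonneg ha1.le hx.le)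
      have hbr : σ ≤ 1 - x1 t / K1 - a1 * η' := by
        rw [hη'id, hσdef]
        have hd : x1 t / K1 ≤ L' / K1 := by gcongr
        have hid : L' / K1 = 1 - εm / K1 := by
          rw [hL'def, sub_div, div_self hK1.ne']
        have hid2 : εm / K1 = 2 * (εm / (2 * K1)) := by
          rw [mul_div_assoc']
          rw [mul_div_mul_left _ _ (two_ne_zero)]
        linarith [hd, hid ▸ hd]
      have hC : x1 t * σ ≤ x1 t * (1 - x1 t / K1 - a1 * η') :=
        mul_le_mul_of_nonneg_left hbr hx.le
      nlinarith [hA, hC]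
    have hentry : ∃ t1, T0 ≤ t1 ∧ L' ≤ x1 t1 := by
      by_contra hno
      push_neg at hno
      have hx0 : 0 < x1 T0 := hxpos T0 hT00
      set Δ : ℝ := L' / (σ * x1 T0) with hΔdef
      have hΔ : 0 ≤ Δ := by rw [hΔdef]; positivity
      have hgrow := expLower (f := x1)
        (f' := fun s => x1 s * (1 - x1 s / K1) - a1 * x1 s * y1 s / (1 + x1 s))
        (a := T0) (b := T0 + Δ) (c := σ)
        (fun s hs => hx1 s (hT00.trans hs.1))
        (fun s hs => hkey s hs.1 (hno s hs.1).le)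
        (Set.right_mem_Icc.mpr (by linarith))
      have hexpΔ : σ * Δ + 1 ≤ Real.exp (σ * (T0 + Δ - T0)) := by
        rw [show T0 + Δ - T0 = Δ by ring]
        exact Real.add_one_le_exp _
      have hσΔ : σ * Δ * x1 T0 = L' := by
        rw [hΔdef]
        field_simp
      have hlt := hno (T0 + Δ) (by linarith)
      nlinarith [hgrow, mul_le_mul_of_nonneg_left hexpΔ hx0.le, hσΔ, hx0, hlt]
    obtain ⟨t1, ht1T0, ht1L⟩ := hentry
    refine ⟨t1, hT00.trans ht1T0, ?_⟩
    intro t ht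
    have hst := stays_ge (f := x1)
      (f' := fun s => x1 s * (1 - x1 s / K1) - a1 * x1 s * y1 s / (1 + x1 s))
      (T := t1) (B := L')
      (fun s hs => hx1 s ((hT00.trans ht1T0).trans hs))
      (fun s hs hsL => le_trans
        (mul_nonneg hσ.le (hxpos s ((hT00.trans ht1T0).trans hs)).le)
        (hkey s (ht1T0.trans hs) hsL))
      ht1L t ht
    rw [hL'def] at hst
    linarith [hst, hεme]
  -- final assembly
  refine ⟨?_, hy1tend, hy2tend⟩
  rw [Metric.tendsto_atTop]
  intro ε hε
  obtain ⟨T2, hT20, hT2⟩ := hupper (ε / 2) (by linarith)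
  obtain ⟨T3, hT30, hT3⟩ := hlower (ε / 2) (by linarith)
  refine ⟨max T2 T3, fun t ht => ?_⟩
  have h1 := hT2 t ((le_max_left _ _).trans ht)
  have h2 := hT3 t ((le_max_right _ _).trans ht)
  rw [Real.dist_eq, abs_lt]
  constructor <;> linarith
end

section
/- Suppose a_iK_i/(1+K_i) < d_i for both i = 1 and i = 2 (equivalently μ_i > K_i where μ_i = d_i/(a_i − d_i) when a_i > d_i). Then for every solution of Model (2) on [0, ∞) with x_1(0) > 0, x_2(0) > 0, y_1(0) ≥ 0, y_2(0) ≥ 0, both predators go extinct and the solution converges to (K_1, 0, K_2, 0): y_1(t) → 0, y_2(t) → 0, x_1(t) → K_1, x_2(t) → K_2 as t → ∞. -/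
open Filter

open Set in
/-- If `f` has derivative `g` on `[a,b]` and `g ≥ 0` there, then `f a ≤ f b`. -/
lemma ModelAux.deriv_nonneg_le {f g : ℝ → ℝ} {a b : ℝ} (hab : a ≤ b)
    (hf : ∀ t ∈ Icc a b, HasDerivAt f (g t) t)
    (hg : ∀ t ∈ Icc a b, 0 ≤ g t) : f a ≤ f b := by
  have hc : ContinuousOn f (Icc a b) := fun t ht => (hf t ht).continuousAt.continuousWithinAt
  have hmono : MonotoneOn f (Icc a b) := by
    apply monotoneOn_of_deriv_nonneg (convex_Icc a b) hc
    · intro x hx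
      rw [interior_Icc] at hx
      exact ((hf x (Ioo_subset_Icc_self hx)).differentiableAt).differentiableWithinAt
    · intro x hx
      rw [interior_Icc] at hx
      rw [(hf x (Ioo_subset_Icc_self hx)).deriv]
      exact hg x (Ioo_subset_Icc_self hx)
  exact hmono (left_mem_Icc.2 hab) (right_mem_Icc.2 hab) hab

open Set in
lemma ModelAux.deriv_nonpos_le {f g : ℝ → ℝ} {a b : ℝ} (hab : a ≤ b)
    (hf : ∀ t ∈ Icc a b, HasDerivAt f (g t) t)
    (hg : ∀ t ∈ Icc a b, g t ≤ 0) : f b ≤ f a := by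
  have h := ModelAux.deriv_nonneg_le (f := fun t => -f t) (g := fun t => -g t) hab
    (fun t ht => (hf t ht).neg) (fun t ht => neg_nonneg.2 (hg t ht))
  simpa using h

open Set in
/-- Barrier lemma (upper). -/
lemma ModelAux.barrier_le {f g : ℝ → ℝ} {a c : ℝ}
    (hf : ∀ t, a ≤ t → HasDerivAt f (g t) t)
    (h0 : f a ≤ c)
    (hg : ∀ t, a ≤ t → c ≤ f t → g t ≤ 0) :
    ∀ t, a ≤ t → f t ≤ c := by
  intro t1 ht1
  by_contra hcon
  push_neg at hcon
  set S : Set ℝ := {t | t ∈ Icc a t1 ∧ f t ≤ c} with hS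
  have hSne : S.Nonempty := ⟨a, left_mem_Icc.2 ht1, h0⟩
  have hScl : IsClosed S := by
    have hc : ContinuousOn f (Icc a t1) := fun s hs =>
      (hf s hs.1).continuousAt.continuousWithinAt
    have hEq : S = Icc a t1 ∩ f ⁻¹' (Iic c) := by
      ext s; constructor
      · rintro ⟨h1, h2⟩; exact ⟨h1, h2⟩
      · rintro ⟨h1, h2⟩; exact ⟨h1, h2⟩
    rw [hEq]
    exact ContinuousOn.preimage_isClosed_of_isClosed hc isClosed_Icc isClosed_Iic
  have hSbdd : BddAbove S := ⟨t1, fun s hs => hs.1.2⟩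
  set t0 := sSup S with ht0def
  have ht0S : t0 ∈ S := hScl.csSup_mem hSne hSbdd
  have ht0le : t0 ≤ t1 := ht0S.1.2
  have ht0a : a ≤ t0 := ht0S.1.1
  have ht0c : f t0 ≤ c := ht0S.2
  have hgt : ∀ s, t0 < s → s ≤ t1 → c < f s := by
    intro s hs hs1
    by_contra h
    push_neg at h
    exact absurd (le_csSup hSbdd ⟨⟨le_trans ht0a hs.le, hs1⟩, h⟩) (not_le.2 hs)
  have ht0lt : t0 < t1 := lt_of_le_of_ne ht0le (fun h => absurd ht0c (h ▸ not_le.2 hcon))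
  have hkey : ∀ s', t0 < s' → s' ≤ t1 → f t1 ≤ f s' := by
    intro s' hs'0 hs'1
    apply ModelAux.deriv_nonpos_le hs'1 (fun u hu => hf u (le_trans ht0a (le_trans hs'0.le hu.1)))
    intro u hu
    apply hg u (le_trans ht0a (le_trans hs'0.le hu.1))
    rcases eq_or_lt_of_le hu.1 with h | h
    · exact h ▸ (hgt s' hs'0 hs'1).le
    · exact (hgt u (lt_trans hs'0 h) hu.2).le
  have hlim : Filter.Tendsto f (nhdsWithin t0 (Ioi t0)) (nhds (f t0)) :=
    ((hf t0 ht0a).continuousAt).continuousWithinAt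
  have hev : ∀ᶠ s' in nhdsWithin t0 (Ioi t0), f t1 ≤ f s' := by
    filter_upwards [Ioo_mem_nhdsGT_of_mem (Set.left_mem_Ico.2 ht0lt)] with s' hs'
    exact hkey s' hs'.1 hs'.2.le
  have : f t1 ≤ f t0 := ge_of_tendsto hlim hev
  linarith

open Set in
lemma ModelAux.barrier_ge {f g : ℝ → ℝ} {a c : ℝ}
    (hf : ∀ t, a ≤ t → HasDerivAt f (g t) t)
    (h0 : c ≤ f a)
    (hg : ∀ t, a ≤ t → f t ≤ c → 0 ≤ g t) :
    ∀ t, a ≤ t → c ≤ f t := by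
  intro t ht
  have h := ModelAux.barrier_le (f := fun s => -f s) (g := fun s => -g s) (c := -c)
    (fun s hs => (hf s hs).neg) (by simpa using h0)
    (fun s hs hc => by linarith [hg s hs (by linarith)]) t ht
  simpa using h

open Set in
/-- derivative of `u ↦ (min u 0)^2`. -/
lemma ModelAux.hasDerivAt_negpart_sq (u : ℝ) :
    HasDerivAt (fun v : ℝ => (min v 0) ^ 2) (2 * min u 0) u := by
  rcases lt_trichotomy u 0 with h | h | h
  · have hev : (fun v : ℝ => (min v 0) ^ 2) =ᶠ[nhds u] fun v => v ^ 2 := by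
      filter_upwards [eventually_lt_nhds h] with v hv
      simp [min_eq_left hv.le]
    have : HasDerivAt (fun v : ℝ => v ^ 2) (2 * u) u := by
      simpa using (hasDerivAt_pow 2 u)
    rw [min_eq_left h.le]
    exact this.congr_of_eventuallyEq hev
  · subst h
    rw [min_self, mul_zero]
    rw [hasDerivAt_iff_isLittleO]
    have h1 : (fun v : ℝ => (min v 0) ^ 2 - (min (0:ℝ) 0) ^ 2 - (v - 0) • (0:ℝ))
        = fun v => (min v 0) ^ 2 := by
      funext v; simp
    rw [h1]
    have h2 : (fun v : ℝ => (min v 0) ^ 2) =O[nhds (0:ℝ)] fun v => v ^ 2 := by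
      apply Asymptotics.IsBigO.of_bound 1
      filter_upwards with v
      have : |min v 0| ≤ |v| := by
        rcases le_or_gt v 0 with h | h
        · simp [min_eq_left h]
        · simp [min_eq_right h.le, abs_nonneg]
      simpa [abs_pow] using pow_le_pow_left₀ (abs_nonneg _) this 2
    have h3 : (fun v : ℝ => v ^ 2) =o[nhds (0:ℝ)] fun v => v - 0 := by
      have := (hasDerivAt_pow 2 (0:ℝ))
      rw [hasDerivAt_iff_isLittleO] at this
      simpa using this
    exact h2.trans_isLittleO h3
  · have hev : (fun v : ℝ => (min v 0) ^ 2) =ᶠ[nhds u] fun _ => (0:ℝ) := by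
      filter_upwards [eventually_gt_nhds h] with v hv
      simp [min_eq_right hv.le]
    rw [min_eq_right h.le, mul_zero]
    exact (hasDerivAt_const u 0).congr_of_eventuallyEq hev

open Set in
/-- Positivity via first-crossing and exponential trick. -/
lemma ModelAux.pos_of_ode {f g : ℝ → ℝ}
    (hf : ∀ t, (0:ℝ) ≤ t → HasDerivAt f (g t) t)
    (h0 : 0 < f 0)
    (hb : ∀ T, 0 < T → ∃ B : ℝ, ∀ t ∈ Icc (0:ℝ) T, 0 ≤ f t → -(B * f t) ≤ g t) :
    ∀ t, 0 ≤ t → 0 < f t := by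
  intro t1 ht1
  by_contra hcon
  push_neg at hcon
  set S : Set ℝ := {t | t ∈ Icc (0:ℝ) t1 ∧ f t ≤ 0} with hS
  have hSne : S.Nonempty := ⟨t1, right_mem_Icc.2 ht1, hcon⟩
  have hScl : IsClosed S := by
    have hc : ContinuousOn f (Icc 0 t1) := fun s hs =>
      (hf s hs.1).continuousAt.continuousWithinAt
    have hEq : S = Icc (0:ℝ) t1 ∩ f ⁻¹' (Iic 0) := by
      ext s; exact ⟨fun ⟨h1, h2⟩ => ⟨h1, h2⟩, fun ⟨h1, h2⟩ => ⟨h1, h2⟩⟩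
    rw [hEq]
    exact ContinuousOn.preimage_isClosed_of_isClosed hc isClosed_Icc isClosed_Iic
  have hSbdd : BddBelow S := ⟨0, fun s hs => hs.1.1⟩
  set t0 := sInf S with ht0def
  have ht0S : t0 ∈ S := hScl.csInf_mem hSne hSbdd
  have ht00 : 0 ≤ t0 := ht0S.1.1
  have ht0t1 : t0 ≤ t1 := ht0S.1.2
  have ht0f : f t0 ≤ 0 := ht0S.2
  have ht0pos : 0 < t0 := by
    rcases eq_or_lt_of_le ht00 with h | h
    · exfalso; rw [← h] at ht0f; exact absurd ht0f (not_le.2 h0)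
    · exact h
  have hfpos : ∀ s, 0 ≤ s → s < t0 → 0 < f s := by
    intro s hs0 hst
    by_contra h
    push_neg at h
    exact absurd (csInf_le hSbdd ⟨⟨hs0, le_trans hst.le ht0t1⟩, h⟩) (not_le.2 hst)
  have hf0 : ∀ s ∈ Icc (0:ℝ) t0, 0 ≤ f s := by
    intro s hs
    rcases eq_or_lt_of_le hs.2 with h | h
    · rw [h]
      have hlim : Filter.Tendsto f (nhdsWithin t0 (Iio t0)) (nhds (f t0)) :=
        ((hf t0 ht00).continuousAt).continuousWithinAt
      apply ge_of_tendsto hlim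
      filter_upwards [Ioo_mem_nhdsLT_of_mem (Set.right_mem_Ioc.2 ht0pos)] with v hv
      exact (hfpos v hv.1.le hv.2).le
    · exact (hfpos s hs.1 h).le
  obtain ⟨B, hB⟩ := hb t0 ht0pos
  have key : f 0 * Real.exp (B * 0) ≤ f t0 * Real.exp (B * t0) := by
    have hdl := ModelAux.deriv_nonneg_le (f := fun s => f s * Real.exp (B * s))
      (g := fun s => g s * Real.exp (B * s) + f s * (Real.exp (B * s) * B)) ht00
    apply hdl
    · intro s hs
      have := (hf s hs.1).mul (((hasDerivAt_id s).const_mul B).exp)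
      exact this.congr_deriv (by simp)
    · intro s hs
      have h1 := hB s hs (hf0 s hs)
      have h2 : (0:ℝ) < Real.exp (B * s) := Real.exp_pos _
      show 0 ≤ g s * Real.exp (B * s) + f s * (Real.exp (B * s) * B)
      nlinarith [hf0 s hs]
  rw [mul_zero, Real.exp_zero, mul_one] at key
  nlinarith [Real.exp_pos (B * t0)]

open Set in
/-- Exponential upper comparison. -/
lemma ModelAux.exp_bound_upper {f g : ℝ → ℝ} {T lam : ℝ}
    (hf : ∀ t, T ≤ t → HasDerivAt f (g t) t)
    (hg : ∀ t, T ≤ t → g t ≤ lam * f t) :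
    ∀ t, T ≤ t → f t ≤ f T * Real.exp (lam * (t - T)) := by
  intro t ht
  have key : f t * Real.exp (-lam * t) ≤ f T * Real.exp (-lam * T) := by
    have hdl := ModelAux.deriv_nonpos_le (f := fun s => f s * Real.exp (-lam * s))
      (g := fun s => g s * Real.exp (-lam * s) + f s * (Real.exp (-lam * s) * -lam)) ht
    apply hdl
    · intro s hs
      have := (hf s hs.1).mul (((hasDerivAt_id s).const_mul (-lam)).exp)
      exact this.congr_deriv (by simp)
    · intro s hs
      have h1 := hg s hs.1
      have h2 : (0:ℝ) < Real.exp (-lam * s) := Real.exp_pos _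
      show g s * Real.exp (-lam * s) + f s * (Real.exp (-lam * s) * -lam) ≤ 0
      nlinarith
  have h3 : (0:ℝ) < Real.exp (-lam * t) := Real.exp_pos _
  have h4 : f t ≤ f T * Real.exp (-lam * T) / Real.exp (-lam * t) := by
    rw [le_div_iff₀ h3]; exact key
  calc f t ≤ f T * Real.exp (-lam * T) / Real.exp (-lam * t) := h4
    _ = f T * Real.exp (lam * (t - T)) := by
        rw [mul_div_assoc, ← Real.exp_sub]
        congr 1
        ring

open Set in
lemma ModelAux.exp_bound_lower {f g : ℝ → ℝ} {T lam : ℝ}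
    (hf : ∀ t, T ≤ t → HasDerivAt f (g t) t)
    (hg : ∀ t, T ≤ t → lam * f t ≤ g t) :
    ∀ t, T ≤ t → f T * Real.exp (lam * (t - T)) ≤ f t := by
  intro t ht
  have h := ModelAux.exp_bound_upper (f := fun s => -f s) (g := fun s => -g s)
    (lam := lam) (fun s hs => (hf s hs).neg)
    (fun s hs => by linarith [hg s hs]) t ht
  nlinarith [h]

open Set in
/-- Escape below a level with uniformly negative drift above it. -/
lemma ModelAux.eventually_le_of_neg_drift {f g : ℝ → ℝ} {c η T0 : ℝ} (hη : 0 < η)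
    (hf : ∀ t, T0 ≤ t → HasDerivAt f (g t) t)
    (hg : ∀ t, T0 ≤ t → c ≤ f t → g t ≤ -η) :
    ∃ T, T0 ≤ T ∧ ∀ t, T ≤ t → f t ≤ c := by
  by_cases hex : ∃ s, T0 ≤ s ∧ f s ≤ c
  · obtain ⟨s, hs0, hsc⟩ := hex
    refine ⟨s, hs0, ModelAux.barrier_le (fun t ht => hf t (le_trans hs0 ht)) hsc ?_⟩
    intro t ht hc
    linarith [hg t (le_trans hs0 ht) hc]
  · push_neg at hex
    exfalso
    obtain ⟨T, hT⟩ : ∃ T : ℝ, T = T0 + (f T0 - c) / η + 1 := ⟨_, rfl⟩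
    have hfc : ∀ s, T0 ≤ s → c < f s := fun s hs => hex s hs
    have hTT0 : T0 ≤ T := by
      have : 0 < (f T0 - c) / η := div_pos (by linarith [hfc T0 le_rfl]) hη
      linarith
    have hd : f T + η * T ≤ f T0 + η * T0 := by
      have hdl := ModelAux.deriv_nonpos_le (f := fun s => f s + η * s)
        (g := fun s => g s + η) hTT0
        (fun s hs => by
          have := (hf s hs.1).add ((hasDerivAt_id s).const_mul η)
          exact this.congr_deriv (by simp))
        (fun s hs => by
          have := hg s hs.1 (hfc s hs.1).le
          linarith)
      simpa using hdl
    have hηT : η * (T - T0) = (f T0 - c) + η := by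
      rw [hT]
      field_simp
      ring
    have : f T ≤ c - η := by nlinarith
    linarith [hfc T hTT0]

open Set in
/-- Positivity of the prey in one patch. -/
lemma ModelAux.patch_pos (r a K : ℝ) (hr : 0 < r) (ha : 0 < a) (hK : 0 < K)
    (x y : ℝ → ℝ)
    (hx : ∀ t, 0 ≤ t → HasDerivAt x (r * x t * (1 - x t / K) - a * x t * y t / (1 + x t)) t)
    (hyc : ∀ t, 0 ≤ t → ContinuousAt y t)
    (hx0 : 0 < x 0) : ∀ t, 0 ≤ t → 0 < x t := by
  apply ModelAux.pos_of_ode hx hx0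
  intro T hT
  have hcx : ContinuousOn x (Icc 0 T) := fun s hs => ((hx s hs.1).continuousAt).continuousWithinAt
  have hcy : ContinuousOn y (Icc 0 T) := fun s hs => (hyc s hs.1).continuousWithinAt
  obtain ⟨Mx, hMx⟩ := isCompact_Icc.exists_bound_of_continuousOn hcx
  obtain ⟨My, hMy⟩ := isCompact_Icc.exists_bound_of_continuousOn hcy
  set M := max (max Mx My) 1 with hM
  have hM1 : (1:ℝ) ≤ M := le_max_right _ _
  have hMpos : (0:ℝ) < M := lt_of_lt_of_le one_pos hM1
  refine ⟨r * M / K + a * M, ?_⟩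
  intro t ht hxt
  have hxM : x t ≤ M :=
    le_trans (le_trans (le_abs_self _) (hMx t ht)) (le_trans (le_max_left _ _) (le_max_left _ _))
  have hyM : |y t| ≤ M := le_trans (hMy t ht) (le_trans (le_max_right _ _) (le_max_left _ _))
  have hden : (0:ℝ) < 1 + x t := by linarith
  have heq : r * x t * (1 - x t / K) - a * x t * y t / (1 + x t)
      = x t * (r * (1 - x t / K)) - x t * (a * y t / (1 + x t)) := by
    rw [show a * x t * y t = x t * (a * y t) by ring, mul_div_assoc]
    ring
  rw [heq]
  have h1 : a * y t / (1 + x t) ≤ a * M := by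
    rw [div_le_iff₀ hden]
    nlinarith [abs_le.1 hyM, ha.le, mul_nonneg ha.le hMpos.le]
  have h2 : r - r * M / K ≤ r * (1 - x t / K) := by
    have hxK : x t / K ≤ M / K := by gcongr
    have : r * (1 - x t / K) = r - r * (x t / K) := by ring
    rw [this]
    have : r * (x t / K) ≤ r * (M / K) := mul_le_mul_of_nonneg_left hxK hr.le
    have hrw : r * (M / K) = r * M / K := by ring
    linarith [hrw ▸ this]
  nlinarith [mul_le_mul_of_nonneg_left h1 hxt, mul_le_mul_of_nonneg_left h2 hxt,
    mul_nonneg hr.le hxt]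

open Set in
/-- Eventual upper bound `x ≤ K + ε` for the prey. -/
lemma ModelAux.patch_upper (r a K ε : ℝ) (hr : 0 < r) (ha : 0 < a) (hK : 0 < K) (hε : 0 < ε)
    (x y : ℝ → ℝ)
    (hx : ∀ t, 0 ≤ t → HasDerivAt x (r * x t * (1 - x t / K) - a * x t * y t / (1 + x t)) t)
    (hxpos : ∀ t, 0 ≤ t → 0 < x t) (hy0 : ∀ t, 0 ≤ t → 0 ≤ y t) :
    ∃ T, 0 ≤ T ∧ ∀ t, T ≤ t → x t ≤ K + ε := by
  have hη : 0 < r * ε * (K + ε) / K := by positivity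
  apply ModelAux.eventually_le_of_neg_drift (T0 := 0) hη hx
  intro t ht hc
  have hxt := hxpos t ht
  have hyt := hy0 t ht
  have hden : (0:ℝ) < 1 + x t := by linarith
  have hterm : 0 ≤ a * x t * y t / (1 + x t) :=
    div_nonneg (by positivity) hden.le
  have hmain : r * x t * (1 - x t / K) ≤ -(r * ε * (K + ε) / K) := by
    have heq : r * x t * (1 - x t / K) = r * (x t * (K - x t)) / K := by
      field_simp
    rw [heq, div_le_iff₀ hK, neg_mul, div_mul_cancel₀ _ hK.ne']
    have hs : 0 ≤ x t - K - ε := by linarith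
    nlinarith [mul_nonneg (mul_nonneg hr.le hs) hK.le,
      mul_nonneg (mul_nonneg hr.le hs) hε.le,
      mul_nonneg (mul_nonneg hr.le hs) hs]
  linarith

open Set in
/-- Convergence of the prey to carrying capacity once the predator vanishes. -/
lemma ModelAux.patch_x (r a K : ℝ) (hr : 0 < r) (ha : 0 < a) (hK : 0 < K)
    (x y : ℝ → ℝ)
    (hx : ∀ t, 0 ≤ t → HasDerivAt x (r * x t * (1 - x t / K) - a * x t * y t / (1 + x t)) t)
    (hxpos : ∀ t, 0 ≤ t → 0 < x t) (hy0 : ∀ t, 0 ≤ t → 0 ≤ y t)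
    (hyto : Tendsto y atTop (nhds 0)) : Tendsto x atTop (nhds K) := by
  rw [Metric.tendsto_atTop]
  intro ε hε
  set ε' := min (ε / 2) (K / 2) with hε'def
  have hε'pos : 0 < ε' := lt_min (by linarith) (by linarith)
  have hε'K : ε' ≤ K / 2 := min_le_right _ _
  have hε'ε : ε' ≤ ε / 2 := min_le_left _ _
  obtain ⟨Tu, hTu0, hTu⟩ := ModelAux.patch_upper r a K ε' hr ha hK hε'pos x y hx hxpos hy0
  -- lower bound part
  set lam := r * ε' / (2 * K) with hlamdef
  have hlampos : 0 < lam := by positivity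
  have hbpos : (0:ℝ) < r * ε' / (2 * K * a) := by positivity
  obtain ⟨T1', hT1'⟩ := eventually_atTop.1 (hyto.eventually (eventually_lt_nhds hbpos))
  set T1 := max T1' 0 with hT1def
  have hT10 : (0:ℝ) ≤ T1 := le_max_right _ _
  have hlow : ∀ t, T1 ≤ t → x t ≤ K - ε' →
      lam * x t ≤ r * x t * (1 - x t / K) - a * x t * y t / (1 + x t) := by
    intro t ht hxle
    have ht0 : (0:ℝ) ≤ t := le_trans hT10 ht
    have hxt := hxpos t ht0
    have hyt0 := hy0 t ht0
    have hytb : y t < r * ε' / (2 * K * a) := hT1' t (le_trans (le_max_left _ _) ht)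
    have hden : (0:ℝ) < 1 + x t := by linarith
    have h5 : a * x t * y t / (1 + x t) ≤ a * x t * y t :=
      div_le_self (by positivity) (by linarith)
    have h6 : ε' / K ≤ 1 - x t / K := by
      rw [div_le_iff₀ hK, sub_mul, one_mul, div_mul_cancel₀ _ hK.ne']
      linarith
    have h8 : r * x t * (ε' / K) ≤ r * x t * (1 - x t / K) :=
      mul_le_mul_of_nonneg_left h6 (by positivity)
    have h9 : a * x t * y t ≤ a * x t * (r * ε' / (2 * K * a)) :=
      mul_le_mul_of_nonneg_left hytb.le (by positivity)
    have h10 : a * x t * (r * ε' / (2 * K * a)) = lam * x t := by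
      rw [hlamdef]
      field_simp
    have h11 : r * x t * (ε' / K) = 2 * (lam * x t) := by
      rw [hlamdef]
      field_simp
    nlinarith [h5, h8, h9]
  -- there is a time where x ≥ K - ε'
  have hex : ∃ s, T1 ≤ s ∧ K - ε' ≤ x s := by
    by_contra hcon
    push_neg at hcon
    have hgrow := ModelAux.exp_bound_lower (T := T1) (lam := lam)
      (fun t ht => hx t (le_trans hT10 ht))
      (fun t ht => hlow t ht (hcon t ht).le)
    have htends : Tendsto (fun t => x T1 * Real.exp (lam * (t - T1))) atTop atTop := by
      apply Tendsto.const_mul_atTop (hxpos T1 hT10)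
      apply Real.tendsto_exp_atTop.comp
      apply Tendsto.const_mul_atTop hlampos
      have := tendsto_atTop_add_const_right atTop (-T1) tendsto_id
      simpa [sub_eq_add_neg] using this
    obtain ⟨t, htg, htT1⟩ :=
      ((htends.eventually_ge_atTop (K - ε')).and (eventually_ge_atTop T1)).exists
    exact absurd (le_trans htg (hgrow t htT1)) (not_le.2 (hcon t htT1))
  obtain ⟨s, hsT1, hsx⟩ := hex
  have hstay : ∀ t, s ≤ t → K - ε' ≤ x t := by
    apply ModelAux.barrier_ge (fun t ht => hx t (le_trans (le_trans hT10 hsT1) ht)) hsx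
    intro t ht hle
    have := hlow t (le_trans hsT1 ht) hle
    have hxt := hxpos t (le_trans (le_trans hT10 hsT1) ht)
    nlinarith
  refine ⟨max Tu s, ?_⟩
  intro t ht
  have h1 : x t ≤ K + ε' := hTu t (le_trans (le_max_left _ _) ht)
  have h2 : K - ε' ≤ x t := hstay t (le_trans (le_max_right _ _) ht)
  rw [Real.dist_eq, abs_sub_lt_iff]
  constructor <;> linarith

/-- Pure arithmetic: quadratic estimate for the negative-part Lyapunov function. -/
lemma ModelAux.arith_negpart (a1 d1 ρ1 a2 d2 ρ2 m1 m2 u1 u2 n1 n2 : ℝ)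
    (hd1 : 0 ≤ d1) (hd2 : 0 ≤ d2) (hρ1 : 0 ≤ ρ1) (hρ2 : 0 ≤ ρ2)
    (hm1l : 0 ≤ m1) (hm1u : m1 ≤ a1) (hm2l : 0 ≤ m2) (hm2u : m2 ≤ a2)
    (hn1 : n1 ≤ 0) (hn2 : n2 ≤ 0)
    (hn1y : n1 * u1 = n1 ^ 2) (hn2y : n2 * u2 = n2 ^ 2)
    (hn1le : n1 ≤ u1) (hn2le : n2 ≤ u2) :
    2 * n1 * ((m1 - d1 - ρ1) * u1 + ρ1 * u2) +
      2 * n2 * ((m2 - d2 - ρ2) * u2 + ρ2 * u1) ≤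
    (2 * (a1 + d1 + ρ1) + 2 * (a2 + d2 + ρ2) + ρ1 + ρ2) * (n1 ^ 2 + n2 ^ 2) := by
  have hcross1 : n1 * u2 ≤ n1 * n2 := mul_le_mul_of_nonpos_left hn2le hn1
  have hcross2 : n2 * u1 ≤ n2 * n1 := mul_le_mul_of_nonpos_left hn1le hn2
  have hsq : 2 * (n1 * n2) ≤ n1 ^ 2 + n2 ^ 2 := by nlinarith [sq_nonneg (n1 - n2)]
  have hd1' : (m1 - d1 - ρ1) * (n1 * u1) ≤ (a1 + d1 + ρ1) * n1 ^ 2 := by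
    rw [hn1y]
    exact mul_le_mul_of_nonneg_right (by linarith) (sq_nonneg _)
  have hd2' : (m2 - d2 - ρ2) * (n2 * u2) ≤ (a2 + d2 + ρ2) * n2 ^ 2 := by
    rw [hn2y]
    exact mul_le_mul_of_nonneg_right (by linarith) (sq_nonneg _)
  have ha1' : 0 ≤ a1 := le_trans hm1l hm1u
  have ha2' : 0 ≤ a2 := le_trans hm2l hm2u
  nlinarith [hd1', hd2', mul_le_mul_of_nonneg_left hcross1 hρ1,
    mul_le_mul_of_nonneg_left hcross2 hρ2,
    mul_le_mul_of_nonneg_left hsq hρ1, mul_le_mul_of_nonneg_left hsq hρ2,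
    mul_nonneg (show (0:ℝ) ≤ 2 * (a2 + d2 + ρ2) by linarith) (sq_nonneg n1),
    mul_nonneg (show (0:ℝ) ≤ 2 * (a1 + d1 + ρ1) by linarith) (sq_nonneg n2),
    sq_nonneg n1, sq_nonneg n2]

/-- Pure arithmetic: the weighted predator Lyapunov function decays. -/
lemma ModelAux.arith_lyap (δ ρ1 ρ2 m1 m2 d1 d2 u1 u2 : ℝ)
    (hδ : 0 < δ) (hρ1 : 0 ≤ ρ1) (hρ2 : 0 ≤ ρ2) (hu1 : 0 ≤ u1) (hu2 : 0 ≤ u2)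
    (hm1 : m1 ≤ d1 - δ) (hm2 : m2 ≤ d2 - δ) :
    (ρ2 + δ / 2) * ((m1 - d1 - ρ1) * u1 + ρ1 * u2) +
      (ρ1 + δ / 2) * ((m2 - d2 - ρ2) * u2 + ρ2 * u1) ≤
    -(δ / 2) * ((ρ2 + δ / 2) * u1 + (ρ1 + δ / 2) * u2) := by
  have hC1 : 0 ≤ -(δ / 2) * (ρ2 + δ / 2) - (ρ2 + δ / 2) * (m1 - d1 - ρ1)
      - (ρ1 + δ / 2) * ρ2 := by
    nlinarith [mul_le_mul_of_nonneg_left (show m1 - d1 - ρ1 ≤ -δ - ρ1 by linarith)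
      (show (0:ℝ) ≤ ρ2 + δ / 2 by linarith)]
  have hC2 : 0 ≤ -(δ / 2) * (ρ1 + δ / 2) - (ρ1 + δ / 2) * (m2 - d2 - ρ2)
      - (ρ2 + δ / 2) * ρ1 := by
    nlinarith [mul_le_mul_of_nonneg_left (show m2 - d2 - ρ2 ≤ -δ - ρ2 by linarith)
      (show (0:ℝ) ≤ ρ1 + δ / 2 by linarith)]
  nlinarith [mul_nonneg hu1 hC1, mul_nonneg hu2 hC2]

/-- Pure arithmetic: the predation rate stays below `d - δ`. -/
lemma ModelAux.arith_m_small (a K d δ1 δ ε u : ℝ) (ha : 0 < a) (hK : 0 < K)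
    (hu : 0 < u) (huK : u ≤ K + ε) (hA : (d - δ1) * (1 + K) = a * K) (hδ1 : 0 < δ1)
    (hε : a * ε = δ1 / 2) (hεp : 0 < ε) (hδle : δ ≤ δ1 / 2) (hδ : 0 < δ)
    (hδ1d : δ1 ≤ d) : a * u / (1 + u) ≤ d - δ := by
  have hd1 : (0:ℝ) < 1 + u := by linarith
  have hE : (0:ℝ) < 1 + (K + ε) := by linarith
  have step1 : a * u / (1 + u) ≤ a * (K + ε) / (1 + (K + ε)) := by
    rw [div_le_div_iff₀ hd1 hE]
    nlinarith [mul_le_mul_of_nonneg_left huK ha.le]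
  have step2 : a * (K + ε) / (1 + (K + ε)) ≤ d - δ := by
    rw [div_le_iff₀ hE]
    nlinarith [mul_nonneg (show (0:ℝ) ≤ d - δ by linarith) hεp.le,
      mul_nonneg (show (0:ℝ) ≤ δ1 / 2 - δ by linarith) hK.le,
      mul_nonneg hδ1.le hK.le]
  linarith

set_option maxHeartbeats 1000000 in
/-- **Predator extinction and global stability of `(K₁, 0, K₂, 0)` for the
classical two-patch model (2).**  If `aᵢKᵢ/(1+Kᵢ) < dᵢ` for `i = 1, 2`
(equivalently `μᵢ > Kᵢ`), then every solution of Model (2) with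
`x₁(0) > 0`, `x₂(0) > 0`, `y₁(0) ≥ 0`, `y₂(0) ≥ 0` converges to
`(K₁, 0, K₂, 0)` as `t → ∞`. -/
theorem model2_global_stability_predator_free
    (r a1 a2 K1 K2 d1 d2 ρ1 ρ2 : ℝ)
    (hr : 0 < r) (ha1 : 0 < a1) (ha2 : 0 < a2) (hK1 : 0 < K1) (hK2 : 0 < K2)
    (hd1 : 0 < d1) (hd2 : 0 < d2) (hρ1 : 0 ≤ ρ1) (hρ2 : 0 ≤ ρ2)
    (hμ1 : a1 * K1 / (1 + K1) < d1) (hμ2 : a2 * K2 / (1 + K2) < d2)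
    (x1 y1 x2 y2 : ℝ → ℝ)
    (hx1 : ∀ t : ℝ, 0 ≤ t → HasDerivAt x1
      (x1 t * (1 - x1 t / K1) - a1 * x1 t * y1 t / (1 + x1 t)) t)
    (hy1 : ∀ t : ℝ, 0 ≤ t → HasDerivAt y1
      (a1 * x1 t * y1 t / (1 + x1 t) - d1 * y1 t + ρ1 * (y2 t - y1 t)) t)
    (hx2 : ∀ t : ℝ, 0 ≤ t → HasDerivAt x2
      (r * x2 t * (1 - x2 t / K2) - a2 * x2 t * y2 t / (1 + x2 t)) t)
    (hy2 : ∀ t : ℝ, 0 ≤ t → HasDerivAt y2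
      (a2 * x2 t * y2 t / (1 + x2 t) - d2 * y2 t + ρ2 * (y1 t - y2 t)) t)
    (hx10 : 0 < x1 0) (hy10 : 0 ≤ y1 0) (hx20 : 0 < x2 0) (hy20 : 0 ≤ y2 0) :
    Tendsto y1 atTop (nhds 0) ∧ Tendsto y2 atTop (nhds 0) ∧
      Tendsto x1 atTop (nhds K1) ∧ Tendsto x2 atTop (nhds K2) := by
  -- continuity of the predators
  have hcy1 : ∀ t : ℝ, 0 ≤ t → ContinuousAt y1 t := fun t ht => (hy1 t ht).continuousAt
  have hcy2 : ∀ t : ℝ, 0 ≤ t → ContinuousAt y2 t := fun t ht => (hy2 t ht).continuousAt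
  have hx1' : ∀ t : ℝ, 0 ≤ t → HasDerivAt x1
      (1 * x1 t * (1 - x1 t / K1) - a1 * x1 t * y1 t / (1 + x1 t)) t := by
    intro t ht; simpa using hx1 t ht
  -- positivity of the prey
  have hx1pos : ∀ t : ℝ, 0 ≤ t → 0 < x1 t :=
    ModelAux.patch_pos 1 a1 K1 one_pos ha1 hK1 x1 y1 hx1' hcy1 hx10
  have hx2pos : ∀ t : ℝ, 0 ≤ t → 0 < x2 t :=
    ModelAux.patch_pos r a2 K2 hr ha2 hK2 x2 y2 hx2 hcy2 hx20
  have hden1 : ∀ t : ℝ, 0 ≤ t → (0:ℝ) < 1 + x1 t := fun t ht => by linarith [hx1pos t ht]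
  have hden2 : ∀ t : ℝ, 0 ≤ t → (0:ℝ) < 1 + x2 t := fun t ht => by linarith [hx2pos t ht]
  have hm1b : ∀ t : ℝ, 0 ≤ t →
      0 ≤ a1 * x1 t / (1 + x1 t) ∧ a1 * x1 t / (1 + x1 t) ≤ a1 := by
    intro t ht
    constructor
    · exact div_nonneg (mul_nonneg ha1.le (hx1pos t ht).le) (hden1 t ht).le
    · rw [div_le_iff₀ (hden1 t ht)]
      nlinarith [hx1pos t ht, ha1.le]
  have hm2b : ∀ t : ℝ, 0 ≤ t →
      0 ≤ a2 * x2 t / (1 + x2 t) ∧ a2 * x2 t / (1 + x2 t) ≤ a2 := by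
    intro t ht
    constructor
    · exact div_nonneg (mul_nonneg ha2.le (hx2pos t ht).le) (hden2 t ht).le
    · rw [div_le_iff₀ (hden2 t ht)]
      nlinarith [hx2pos t ht, ha2.le]
  -- nonnegativity of the predators
  have hynn : ∀ t : ℝ, 0 ≤ t → 0 ≤ y1 t ∧ 0 ≤ y2 t := by
    have hVderiv : ∀ t : ℝ, 0 ≤ t →
        HasDerivAt (fun s => (min (y1 s) 0) ^ 2 + (min (y2 s) 0) ^ 2)
        (2 * min (y1 t) 0 *
          (a1 * x1 t * y1 t / (1 + x1 t) - d1 * y1 t + ρ1 * (y2 t - y1 t)) +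
         2 * min (y2 t) 0 *
          (a2 * x2 t * y2 t / (1 + x2 t) - d2 * y2 t + ρ2 * (y1 t - y2 t))) t := by
      intro t ht
      have h1 := (ModelAux.hasDerivAt_negpart_sq (y1 t)).comp t (hy1 t ht)
      have h2 := (ModelAux.hasDerivAt_negpart_sq (y2 t)).comp t (hy2 t ht)
      have h3 := h1.add h2
      exact h3
    have hG : ∀ t : ℝ, 0 ≤ t →
        2 * min (y1 t) 0 *
          (a1 * x1 t * y1 t / (1 + x1 t) - d1 * y1 t + ρ1 * (y2 t - y1 t)) +
        2 * min (y2 t) 0 *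
          (a2 * x2 t * y2 t / (1 + x2 t) - d2 * y2 t + ρ2 * (y1 t - y2 t)) ≤
        (2 * (a1 + d1 + ρ1) + 2 * (a2 + d2 + ρ2) + ρ1 + ρ2) *
          ((min (y1 t) 0) ^ 2 + (min (y2 t) 0) ^ 2) := by
      intro t ht
      obtain ⟨hm1l, hm1u⟩ := hm1b t ht
      obtain ⟨hm2l, hm2u⟩ := hm2b t ht
      have hre1 : a1 * x1 t * y1 t / (1 + x1 t) - d1 * y1 t + ρ1 * (y2 t - y1 t)
          = (a1 * x1 t / (1 + x1 t) - d1 - ρ1) * y1 t + ρ1 * y2 t := by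
        rw [← div_mul_eq_mul_div]; ring
      have hre2 : a2 * x2 t * y2 t / (1 + x2 t) - d2 * y2 t + ρ2 * (y1 t - y2 t)
          = (a2 * x2 t / (1 + x2 t) - d2 - ρ2) * y2 t + ρ2 * y1 t := by
        rw [← div_mul_eq_mul_div]; ring
      rw [hre1, hre2]
      have hn1y : min (y1 t) 0 * y1 t = (min (y1 t) 0) ^ 2 := by
        rcases le_or_gt (y1 t) 0 with h | h
        · rw [min_eq_left h]; ring
        · rw [min_eq_right h.le]; ring
      have hn2y : min (y2 t) 0 * y2 t = (min (y2 t) 0) ^ 2 := by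
        rcases le_or_gt (y2 t) 0 with h | h
        · rw [min_eq_left h]; ring
        · rw [min_eq_right h.le]; ring
      exact ModelAux.arith_negpart a1 d1 ρ1 a2 d2 ρ2 _ _ _ _ _ _
        hd1.le hd2.le hρ1 hρ2 hm1l hm1u hm2l hm2u
        (min_le_right _ _) (min_le_right _ _) hn1y hn2y
        (min_le_left _ _) (min_le_left _ _)
    intro t ht
    have h := ModelAux.exp_bound_upper
      (f := fun s => (min (y1 s) 0) ^ 2 + (min (y2 s) 0) ^ 2)
      (g := fun t => 2 * min (y1 t) 0 *
          (a1 * x1 t * y1 t / (1 + x1 t) - d1 * y1 t + ρ1 * (y2 t - y1 t)) +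
         2 * min (y2 t) 0 *
          (a2 * x2 t * y2 t / (1 + x2 t) - d2 * y2 t + ρ2 * (y1 t - y2 t)))
      (T := 0) (lam := 2 * (a1 + d1 + ρ1) + 2 * (a2 + d2 + ρ2) + ρ1 + ρ2)
      hVderiv hG t ht
    rw [min_eq_right hy10, min_eq_right hy20] at h
    norm_num at h
    have h2 : (0:ℝ) ≤ (min (y2 t) 0) ^ 2 := sq_nonneg _
    have h1 : (0:ℝ) ≤ (min (y1 t) 0) ^ 2 := sq_nonneg _
    constructor
    · rcases le_or_gt 0 (y1 t) with hy | hy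
      · exact hy
      · exfalso
        rw [min_eq_left hy.le] at h
        nlinarith [h, h2, mul_pos (neg_pos.2 hy) (neg_pos.2 hy)]
    · rcases le_or_gt 0 (y2 t) with hy | hy
      · exact hy
      · exfalso
        rw [min_eq_left hy.le] at h
        nlinarith [h, h1, mul_pos (neg_pos.2 hy) (neg_pos.2 hy)]
  have hy1nn : ∀ t : ℝ, 0 ≤ t → 0 ≤ y1 t := fun t ht => (hynn t ht).1
  have hy2nn : ∀ t : ℝ, 0 ≤ t → 0 ≤ y2 t := fun t ht => (hynn t ht).2
  -- choice of margins
  have hD1 : (0:ℝ) < 1 + K1 := by linarith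
  have hD2 : (0:ℝ) < 1 + K2 := by linarith
  obtain ⟨δ1, hδ1def⟩ : ∃ v : ℝ, v = d1 - a1 * K1 / (1 + K1) := ⟨_, rfl⟩
  obtain ⟨δ2, hδ2def⟩ : ∃ v : ℝ, v = d2 - a2 * K2 / (1 + K2) := ⟨_, rfl⟩
  have hδ1pos : 0 < δ1 := by rw [hδ1def]; linarith
  have hδ2pos : 0 < δ2 := by rw [hδ2def]; linarith
  obtain ⟨ε1, hε1def⟩ : ∃ v : ℝ, v = δ1 / (2 * a1) := ⟨_, rfl⟩
  obtain ⟨ε2, hε2def⟩ : ∃ v : ℝ, v = δ2 / (2 * a2) := ⟨_, rfl⟩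
  have hε1pos : 0 < ε1 := by rw [hε1def]; exact div_pos hδ1pos (by linarith)
  have hε2pos : 0 < ε2 := by rw [hε2def]; exact div_pos hδ2pos (by linarith)
  obtain ⟨Tu1, hTu10, hTu1⟩ :=
    ModelAux.patch_upper 1 a1 K1 ε1 one_pos ha1 hK1 hε1pos x1 y1 hx1' hx1pos hy1nn
  obtain ⟨Tu2, hTu20, hTu2⟩ :=
    ModelAux.patch_upper r a2 K2 ε2 hr ha2 hK2 hε2pos x2 y2 hx2 hx2pos hy2nn
  obtain ⟨δ, hδdef⟩ : ∃ v : ℝ, v = min (δ1 / 2) (δ2 / 2) := ⟨_, rfl⟩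
  have hδpos : 0 < δ := by rw [hδdef]; exact lt_min (by linarith) (by linarith)
  have hδle1 : δ ≤ δ1 / 2 := by rw [hδdef]; exact min_le_left _ _
  have hδle2 : δ ≤ δ2 / 2 := by rw [hδdef]; exact min_le_right _ _
  obtain ⟨T0, hT0def⟩ : ∃ v : ℝ, v = max Tu1 Tu2 := ⟨_, rfl⟩
  have hT0u1 : Tu1 ≤ T0 := by rw [hT0def]; exact le_max_left _ _
  have hT0u2 : Tu2 ≤ T0 := by rw [hT0def]; exact le_max_right _ _
  have hT00 : (0:ℝ) ≤ T0 := le_trans hTu10 hT0u1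
  have hA1 : (d1 - δ1) * (1 + K1) = a1 * K1 := by
    rw [hδ1def]
    field_simp
    ring
  have hA2 : (d2 - δ2) * (1 + K2) = a2 * K2 := by
    rw [hδ2def]
    field_simp
    ring
  have hδ1d : δ1 ≤ d1 := by
    have : 0 ≤ a1 * K1 / (1 + K1) := div_nonneg (by positivity) hD1.le
    rw [hδ1def]; linarith
  have hδ2d : δ2 ≤ d2 := by
    have : 0 ≤ a2 * K2 / (1 + K2) := div_nonneg (by positivity) hD2.le
    rw [hδ2def]; linarith
  have halε1 : a1 * ε1 = δ1 / 2 := by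
    rw [hε1def]
    field_simp
  have halε2 : a2 * ε2 = δ2 / 2 := by
    rw [hε2def]
    field_simp
  have hm1small : ∀ t : ℝ, T0 ≤ t → a1 * x1 t / (1 + x1 t) ≤ d1 - δ := by
    intro t ht
    have ht0 : (0:ℝ) ≤ t := le_trans hT00 ht
    exact ModelAux.arith_m_small a1 K1 d1 δ1 δ ε1 (x1 t) ha1 hK1 (hx1pos t ht0)
      (hTu1 t (le_trans hT0u1 ht)) hA1 hδ1pos halε1 hε1pos hδle1 hδpos hδ1d
  have hm2small : ∀ t : ℝ, T0 ≤ t → a2 * x2 t / (1 + x2 t) ≤ d2 - δ := by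
    intro t ht
    have ht0 : (0:ℝ) ≤ t := le_trans hT00 ht
    exact ModelAux.arith_m_small a2 K2 d2 δ2 δ ε2 (x2 t) ha2 hK2 (hx2pos t ht0)
      (hTu2 t (le_trans hT0u2 ht)) hA2 hδ2pos halε2 hε2pos hδle2 hδpos hδ2d
  -- the Lyapunov function for extinction
  have hppos : (0:ℝ) < ρ2 + δ / 2 := by linarith
  have hqpos : (0:ℝ) < ρ1 + δ / 2 := by linarith
  have hV2deriv : ∀ t : ℝ, T0 ≤ t →
      HasDerivAt (fun s => (ρ2 + δ / 2) * y1 s + (ρ1 + δ / 2) * y2 s)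
      ((ρ2 + δ / 2) * (a1 * x1 t * y1 t / (1 + x1 t) - d1 * y1 t + ρ1 * (y2 t - y1 t)) +
       (ρ1 + δ / 2) * (a2 * x2 t * y2 t / (1 + x2 t) - d2 * y2 t + ρ2 * (y1 t - y2 t))) t := by
    intro t ht
    exact ((hy1 t (le_trans hT00 ht)).const_mul (ρ2 + δ / 2)).add
      ((hy2 t (le_trans hT00 ht)).const_mul (ρ1 + δ / 2))
  have hV2g : ∀ t : ℝ, T0 ≤ t →
      (ρ2 + δ / 2) * (a1 * x1 t * y1 t / (1 + x1 t) - d1 * y1 t + ρ1 * (y2 t - y1 t)) +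
      (ρ1 + δ / 2) * (a2 * x2 t * y2 t / (1 + x2 t) - d2 * y2 t + ρ2 * (y1 t - y2 t)) ≤
      (-(δ / 2)) * ((ρ2 + δ / 2) * y1 t + (ρ1 + δ / 2) * y2 t) := by
    intro t ht
    have ht0 : (0:ℝ) ≤ t := le_trans hT00 ht
    have hre1 : a1 * x1 t * y1 t / (1 + x1 t) - d1 * y1 t + ρ1 * (y2 t - y1 t)
        = (a1 * x1 t / (1 + x1 t) - d1 - ρ1) * y1 t + ρ1 * y2 t := by
      rw [← div_mul_eq_mul_div]; ring
    have hre2 : a2 * x2 t * y2 t / (1 + x2 t) - d2 * y2 t + ρ2 * (y1 t - y2 t)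
        = (a2 * x2 t / (1 + x2 t) - d2 - ρ2) * y2 t + ρ2 * y1 t := by
      rw [← div_mul_eq_mul_div]; ring
    rw [hre1, hre2]
    exact ModelAux.arith_lyap δ ρ1 ρ2 _ _ d1 d2 (y1 t) (y2 t) hδpos hρ1 hρ2
      (hy1nn t ht0) (hy2nn t ht0) (hm1small t ht) (hm2small t ht)
  have hV2b := ModelAux.exp_bound_upper
    (f := fun s => (ρ2 + δ / 2) * y1 s + (ρ1 + δ / 2) * y2 s)
    (g := fun t => (ρ2 + δ / 2) * (a1 * x1 t * y1 t / (1 + x1 t) - d1 * y1 t +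
        ρ1 * (y2 t - y1 t)) +
      (ρ1 + δ / 2) * (a2 * x2 t * y2 t / (1 + x2 t) - d2 * y2 t + ρ2 * (y1 t - y2 t)))
    (T := T0) (lam := -(δ / 2)) hV2deriv hV2g
  -- the decaying exponential bound
  have hexp0 : Tendsto (fun t : ℝ => Real.exp (-(δ / 2) * (t - T0))) atTop (nhds 0) := by
    have h1 : Tendsto (fun t : ℝ => t - T0) atTop atTop := by
      simpa [sub_eq_add_neg] using tendsto_atTop_add_const_right atTop (-T0) tendsto_id
    have h2 : Tendsto (fun t : ℝ => (δ / 2) * (t - T0)) atTop atTop :=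
      Tendsto.const_mul_atTop (by linarith) h1
    have h3 : Tendsto (fun t : ℝ => -((δ / 2) * (t - T0))) atTop atBot :=
      tendsto_neg_atTop_atBot.comp h2
    have h4 : Tendsto (fun t : ℝ => Real.exp (-((δ / 2) * (t - T0)))) atTop (nhds 0) :=
      Real.tendsto_exp_atBot.comp h3
    simpa [neg_mul] using h4
  have hy1to : Tendsto y1 atTop (nhds 0) := by
    have hbnd1 : Tendsto (fun t : ℝ =>
        (((ρ2 + δ / 2) * y1 T0 + (ρ1 + δ / 2) * y2 T0) / (ρ2 + δ / 2)) *
          Real.exp (-(δ / 2) * (t - T0))) atTop (nhds 0) := by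
      have := hexp0.const_mul (((ρ2 + δ / 2) * y1 T0 + (ρ1 + δ / 2) * y2 T0) / (ρ2 + δ / 2))
      simpa using this
    apply tendsto_of_tendsto_of_tendsto_of_le_of_le' tendsto_const_nhds hbnd1
    · filter_upwards [eventually_ge_atTop (0:ℝ)] with t ht
      exact hy1nn t ht
    · filter_upwards [eventually_ge_atTop T0] with t ht
      have h := hV2b t ht
      have hq2 : 0 ≤ (ρ1 + δ / 2) * y2 t :=
        mul_nonneg hqpos.le (hy2nn t (le_trans hT00 ht))
      rw [div_mul_eq_mul_div, le_div_iff₀ hppos]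
      nlinarith [h, hq2]
  have hy2to : Tendsto y2 atTop (nhds 0) := by
    have hbnd2 : Tendsto (fun t : ℝ =>
        (((ρ2 + δ / 2) * y1 T0 + (ρ1 + δ / 2) * y2 T0) / (ρ1 + δ / 2)) *
          Real.exp (-(δ / 2) * (t - T0))) atTop (nhds 0) := by
      have := hexp0.const_mul (((ρ2 + δ / 2) * y1 T0 + (ρ1 + δ / 2) * y2 T0) / (ρ1 + δ / 2))
      simpa using this
    apply tendsto_of_tendsto_of_tendsto_of_le_of_le' tendsto_const_nhds hbnd2
    · filter_upwards [eventually_ge_atTop (0:ℝ)] with t ht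
      exact hy2nn t ht
    · filter_upwards [eventually_ge_atTop T0] with t ht
      have h := hV2b t ht
      have hp1 : 0 ≤ (ρ2 + δ / 2) * y1 t :=
        mul_nonneg hppos.le (hy1nn t (le_trans hT00 ht))
      rw [div_mul_eq_mul_div, le_div_iff₀ hqpos]
      nlinarith [h, hp1]
  have hx1to : Tendsto x1 atTop (nhds K1) :=
    ModelAux.patch_x 1 a1 K1 one_pos ha1 hK1 x1 y1 hx1' hx1pos hy1nn hy1to
  have hx2to : Tendsto x2 atTop (nhds K2) :=
    ModelAux.patch_x r a2 K2 hr ha2 hK2 x2 y2 hx2 hx2pos hy2nn hy2to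
  exact ⟨hy1to, hy2to, hx1to, hx2to⟩
end
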